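/- arXiv:2504.08105 — 3 statements merged into one kernel-verified Lean document; each statement's English description precedes it below -/
import Mathlib

section
/- Let 0 ≤ τ < σ ≤ ∞ and m ≥ 1, let X : ℝ⁴ → ℝ be a nonzero harmonic polynomial homogeneous of degree 1, and let f : (τ,σ) → ℝ^m be a six-times continuously differentiable function such that u(x) = f(|x|) X(x/|x|) satisfies Δ³u = 0 on the open annulus {x ∈ ℝ⁴ : τ < |x| < σ}. Then there exist vectors B₁, …, B₆ ∈ ℝ^m such that f(r) = B₁ r^{-3} + B₂ r^{-1} + B₃ r + B₄ r ln r + B₅ r³ + B₆ r⁵ for all r ∈ (τ,σ). -/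
set_option maxHeartbeats 1000000
noncomputable section

/-- The Euclidean Laplacian on `ℝ⁴`, `Δu = Σ_{i=1}^4 ∂²u/∂x_i²`, applied componentwise to
vector-valued functions. -/
def lap {V : Type*} [NormedAddCommGroup V] [NormedSpace ℝ V]
    (u : EuclideanSpace ℝ (Fin 4) → V) (x : EuclideanSpace ℝ (Fin 4)) : V :=
  ∑ i : Fin 4,
    fderiv ℝ (fun y => fderiv ℝ u y (EuclideanSpace.single i 1)) x (EuclideanSpace.single i 1)

/-- `P : ℝ⁴ → ℝ` is a harmonic polynomial homogeneous of degree `h`. -/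
def IsHarmonicHomog (h : ℕ) (P : EuclideanSpace ℝ (Fin 4) → ℝ) : Prop :=
  (∃ p : MvPolynomial (Fin 4) ℝ, p.IsHomogeneous h ∧
    ∀ x : EuclideanSpace ℝ (Fin 4), P x = MvPolynomial.eval (fun i => x i) p) ∧
  ∀ x, lap P x = 0

/-! ### Auxiliary machinery -/

open Real Set Filter

section Aux

variable {E : Type*} [NormedAddCommGroup E] [NormedSpace ℝ E]

theorem lap_congr (O : Set (EuclideanSpace ℝ (Fin 4))) (hO : IsOpen O)
    (u v : EuclideanSpace ℝ (Fin 4) → E) (h : ∀ y ∈ O, u y = v y)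
    {x} (hx : x ∈ O) : lap u x = lap v x := by
  unfold lap
  refine Finset.sum_congr rfl fun i _ => ?_
  have hfe : ∀ y ∈ O, fderiv ℝ u y = fderiv ℝ v y := fun y hy =>
    Filter.EventuallyEq.fderiv_eq (Filter.eventually_of_mem (hO.mem_nhds hy) h)
  have : (fun y => fderiv ℝ u y (EuclideanSpace.single i 1)) =ᶠ[nhds x]
      (fun y => fderiv ℝ v y (EuclideanSpace.single i 1)) :=
    Filter.eventually_of_mem (hO.mem_nhds hx) (fun y hy => by simp only [hfe y hy])
  rw [this.fderiv_eq]

theorem const_of (S : Set ℝ) (hS : IsOpen S) (hSc : Convex ℝ S) (F : ℝ → E)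
    (h : ∀ s ∈ S, HasDerivAt F 0 s) : ∃ A, ∀ s ∈ S, F s = A := by
  rcases S.eq_empty_or_nonempty with h0 | ⟨s₀, hs₀⟩
  · exact ⟨0, by simp [h0]⟩
  refine ⟨F s₀, fun s hs => ?_⟩
  apply hSc.is_const_of_fderivWithin_eq_zero (𝕜 := ℝ)
    (fun t ht => ((h t ht).differentiableAt).differentiableWithinAt) ?_ hs hs₀
  intro t ht
  rw [fderivWithin_of_isOpen hS ht, (h t ht).hasFDerivAt.fderiv]
  ext1; simp

theorem integrate (S : Set ℝ) (hS : IsOpen S) (hSc : Convex ℝ S) (W Φ V : ℝ → E)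
    (hW : ∀ s ∈ S, HasDerivAt W (V s) s) (hΦ : ∀ s ∈ S, HasDerivAt Φ (V s) s) :
    ∃ A, ∀ s ∈ S, W s = A + Φ s := by
  obtain ⟨A, hA⟩ := const_of S hS hSc (fun s => W s - Φ s)
    (fun s hs => by simpa using (hW s hs).fun_sub (hΦ s hs))
  exact ⟨A, fun s hs => by have := hA s hs; rw [sub_eq_iff_eq_add] at this; rw [this]⟩

theorem hasDerivAt_congr_d {F : ℝ → E} {f' g' : E} {x : ℝ}
    (h : HasDerivAt F f' x) (he : f' = g') : HasDerivAt F g' x := he ▸ h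

theorem solve_step (S : Set ℝ) (hS : IsOpen S) (hSc : Convex ℝ S)
    (hpos : ∀ s ∈ S, (0:ℝ) < s)
    (W Wd1 Wd2 R Φ Ψ : ℝ → E)
    (hd1 : ∀ s ∈ S, HasDerivAt W (Wd1 s) s) (hd2 : ∀ s ∈ S, HasDerivAt Wd1 (Wd2 s) s)
    (heq : ∀ s ∈ S, (12:ℝ) • Wd1 s + (4*s) • Wd2 s = R s)
    (hΦ : ∀ s ∈ S, HasDerivAt Φ ((s^2/4) • R s) s)
    (hΨ : ∀ s ∈ S, HasDerivAt Ψ ((s^3)⁻¹ • Φ s) s) :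
    ∃ A B : E, ∀ s ∈ S, W s = B + (-(1:ℝ)/2 * (s^2)⁻¹) • A + Ψ s := by
  obtain ⟨A, hA⟩ := integrate S hS hSc (fun s => s^3 • Wd1 s) Φ (fun s => (s^2/4) • R s)
    (fun s hs => by
      have h := (hasDerivAt_pow 3 s).fun_smul (hd2 s hs)
      convert h using 1
      show (s^2/4) • R s = _
      rw [← heq s hs]
      match_scalars <;> push_cast <;> ring)
    hΦ
  have hWd1 : ∀ s ∈ S, Wd1 s = (s^3)⁻¹ • A + (s^3)⁻¹ • Φ s := by
    intro s hs
    have h3 : (s:ℝ)^3 ≠ 0 := pow_ne_zero _ (hpos s hs).ne'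
    have := hA s hs
    calc Wd1 s = (s^3)⁻¹ • ((s^3 : ℝ) • Wd1 s) := (inv_smul_smul₀ h3 _).symm
    _ = (s^3)⁻¹ • A + (s^3)⁻¹ • Φ s := by rw [this, smul_add]
  obtain ⟨B, hB⟩ := integrate S hS hSc W (fun s => (-(1:ℝ)/2 * (s^2)⁻¹) • A + Ψ s) Wd1
    (hd1)
    (fun s hs => by
      have hs0 : s ≠ 0 := (hpos s hs).ne'
      have h2 : (s:ℝ)^2 ≠ 0 := pow_ne_zero _ hs0
      have hsc : HasDerivAt (fun t : ℝ => -(1:ℝ)/2 * (t^2)⁻¹)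
          (-(1:ℝ)/2 * (-((2:ℕ)*s^(2-1))/((s^2)^2))) s := ((hasDerivAt_pow 2 s).inv h2).const_mul _
      have h := (hsc.smul_const A).fun_add (hΨ s hs)
      convert h using 1
      rw [hWd1 s hs]
      match_scalars <;> push_cast <;> (try field_simp) <;> ring)
  exact ⟨A, B, fun s hs => by rw [hB s hs]; abel⟩

end Aux

section Shape

variable {E : Type*} [NormedAddCommGroup E] [NormedSpace ℝ E]

def Xf (c : Fin 4 → ℝ) (y : EuclideanSpace ℝ (Fin 4)) : ℝ := ∑ i, c i * y i
def qf (y : EuclideanSpace ℝ (Fin 4)) : ℝ := ∑ i, y i * y i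

def Lc (c : Fin 4 → ℝ) : EuclideanSpace ℝ (Fin 4) →L[ℝ] ℝ := ∑ i, c i • EuclideanSpace.proj i
def Qc (y : EuclideanSpace ℝ (Fin 4)) : EuclideanSpace ℝ (Fin 4) →L[ℝ] ℝ :=
  ∑ i, (y i • EuclideanSpace.proj i + y i • EuclideanSpace.proj i)

theorem hasFDerivAt_proj (i : Fin 4) (y : EuclideanSpace ℝ (Fin 4)) :
    HasFDerivAt (fun z : EuclideanSpace ℝ (Fin 4) => z i) (EuclideanSpace.proj (𝕜 := ℝ) i) y :=
  (EuclideanSpace.proj (𝕜 := ℝ) i).hasFDerivAt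

theorem hasFDerivAt_Xf (c : Fin 4 → ℝ) (y) : HasFDerivAt (Xf c) (Lc c) y :=
  HasFDerivAt.fun_sum fun i _ => (hasFDerivAt_proj i y).const_mul (c i)

theorem hasFDerivAt_qf (y) : HasFDerivAt qf (Qc y) y :=
  HasFDerivAt.fun_sum fun i _ => (hasFDerivAt_proj i y).fun_mul (hasFDerivAt_proj i y)

theorem Lc_single (c : Fin 4 → ℝ) (i : Fin 4) : Lc c (EuclideanSpace.single i 1) = c i := by
  simp [Lc, EuclideanSpace.single_apply]

theorem Qc_single (y) (i : Fin 4) : Qc y (EuclideanSpace.single i 1) = 2 * y i := by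
  simp only [Qc, ContinuousLinearMap.sum_apply, ContinuousLinearMap.add_apply,
    ContinuousLinearMap.smul_apply, PiLp.proj_apply, EuclideanSpace.single_apply,
    smul_eq_mul, mul_ite, mul_zero, mul_one, Finset.sum_add_distrib, Finset.sum_ite_eq]
  simp; ring

theorem continuous_qf : Continuous (qf : EuclideanSpace ℝ (Fin 4) → ℝ) :=
  continuous_iff_continuousAt.2 fun y => (hasFDerivAt_qf y).continuousAt

variable {c : Fin 4 → ℝ} {S : Set ℝ} {W W1 W2 : ℝ → E}

theorem hasFDerivAt_Wq (h1 : ∀ s ∈ S, HasDerivAt W (W1 s) s) {y} (hy : qf y ∈ S) :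
    HasFDerivAt (fun z => W (qf z))
      ((ContinuousLinearMap.smulRight (1 : ℝ →L[ℝ] ℝ) (W1 (qf y))).comp (Qc y)) y :=
  ((h1 (qf y) hy).hasFDerivAt).comp y (hasFDerivAt_qf y)

theorem hasFDerivAt_main (h1 : ∀ s ∈ S, HasDerivAt W (W1 s) s) {y} (hy : qf y ∈ S) :
    HasFDerivAt (fun z => Xf c z • W (qf z))
      (Xf c y • ((ContinuousLinearMap.smulRight (1 : ℝ →L[ℝ] ℝ) (W1 (qf y))).comp (Qc y)) +
        (Lc c).smulRight (W (qf y))) y :=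
  (hasFDerivAt_Xf c y).smul (hasFDerivAt_Wq h1 hy)

theorem lap_shape (hS : IsOpen S) (h1 : ∀ s ∈ S, HasDerivAt W (W1 s) s)
    (h2 : ∀ s ∈ S, HasDerivAt W1 (W2 s) s) {x} (hx : qf x ∈ S) :
    lap (fun y => Xf c y • W (qf y)) x
      = Xf c x • ((12 : ℝ) • W1 (qf x) + (4 * qf x) • W2 (qf x)) := by
  have hO : IsOpen {y : EuclideanSpace ℝ (Fin 4) | qf y ∈ S} := hS.preimage continuous_qf
  have hfd1 : ∀ i : Fin 4, ∀ y ∈ {y : EuclideanSpace ℝ (Fin 4) | qf y ∈ S},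
      fderiv ℝ (fun z => Xf c z • W (qf z)) y (EuclideanSpace.single i 1)
        = c i • W (qf y) + (Xf c y * (2 * y i)) • W1 (qf y) := by
    intro i y hy
    rw [(hasFDerivAt_main h1 hy).fderiv]
    simp [Lc_single, Qc_single, smul_smul, mul_comm]
    abel
  have key : ∀ i : Fin 4,
      fderiv ℝ (fun y => fderiv ℝ (fun z => Xf c z • W (qf z)) y (EuclideanSpace.single i 1)) x
          (EuclideanSpace.single i 1)
        = c i • ((2 * x i) • W1 (qf x)) +
          ((Xf c x * (2 * x i)) • ((2 * x i) • W2 (qf x)) +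
            (Xf c x * 2 + (2 * x i) * c i) • W1 (qf x)) := by
    intro i
    have hev : (fun y => fderiv ℝ (fun z => Xf c z • W (qf z)) y (EuclideanSpace.single i 1))
        =ᶠ[nhds x] (fun y => c i • W (qf y) + (Xf c y * (2 * y i)) • W1 (qf y)) :=
      Filter.eventually_of_mem (hO.mem_nhds hx) (hfd1 i)
    rw [hev.fderiv_eq]
    have hφ : HasFDerivAt (fun y => c i • W (qf y) + (Xf c y * (2 * y i)) • W1 (qf y))
        ((c i) • ((ContinuousLinearMap.smulRight (1 : ℝ →L[ℝ] ℝ) (W1 (qf x))).comp (Qc x)) +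
          ((Xf c x * (2 * x i)) •
              ((ContinuousLinearMap.smulRight (1 : ℝ →L[ℝ] ℝ) (W2 (qf x))).comp (Qc x)) +
            (Xf c x • ((2:ℝ) • EuclideanSpace.proj i) + (2 * x i) • Lc c).smulRight
              (W1 (qf x)))) x := by
      exact ((hasFDerivAt_Wq h1 hx).const_smul (c i)).add
        (((hasFDerivAt_Xf c x).mul ((hasFDerivAt_proj i x).const_mul 2)).smul
          (hasFDerivAt_Wq h2 hx))
    rw [hφ.fderiv]
    simp [Lc_single, Qc_single, smul_smul, mul_comm]
  unfold lap
  rw [Fin.sum_univ_four]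
  rw [key 0, key 1, key 2, key 3]
  have hXx : Xf c x = c 0 * x 0 + c 1 * x 1 + c 2 * x 2 + c 3 * x 3 := by
    simp [Xf, Fin.sum_univ_four]
  have hqx : qf x = x 0 * x 0 + x 1 * x 1 + x 2 * x 2 + x 3 * x 3 := by
    simp [qf, Fin.sum_univ_four]
  rw [hXx, hqx]
  match_scalars <;> ring

end Shape

section Poly

theorem single_of_degree_one (d : Fin 4 →₀ ℕ) (hd : Finsupp.degree d = 1) :
    ∃ i, d = Finsupp.single i 1 := by
  have hne : d ≠ 0 := by
    intro h; rw [h] at hd; simp at hd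
  obtain ⟨i, hi⟩ := Finsupp.ne_iff.1 hne
  simp only [Finsupp.coe_zero, Pi.zero_apply] at hi
  have hi1 : d i = 1 := le_antisymm (hd ▸ Finsupp.le_degree i d) (Nat.one_le_iff_ne_zero.2 hi)
  refine ⟨i, ?_⟩
  ext j
  rcases eq_or_ne j i with rfl | hj
  · simp [hi1]
  · simp only [Finsupp.single_apply, if_neg (Ne.symm hj)]
    by_contra hj0
    have h2 : d i + d j ≤ Finsupp.degree d := by
      rw [Finsupp.degree, ← Finset.sum_pair (Ne.symm hj)]
      exact Finset.sum_le_sum_of_subset (by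
        intro k hk; simp only [Finset.mem_insert, Finset.mem_singleton] at hk
        rcases hk with rfl | rfl
        · exact Finsupp.mem_support_iff.2 hi
        · exact Finsupp.mem_support_iff.2 hj0)
    omega

theorem homog_one_eval (p : MvPolynomial (Fin 4) ℝ) (hp : p.IsHomogeneous 1)
    (x : Fin 4 → ℝ) :
    MvPolynomial.eval x p = ∑ i, MvPolynomial.coeff (Finsupp.single i 1) p * x i := by
  rw [MvPolynomial.eval_eq]
  have hsub : p.support ⊆ Finset.image (fun i => Finsupp.single i 1) Finset.univ := by
    intro d hd
    obtain ⟨i, rfl⟩ := single_of_degree_one d (by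
      rw [Finsupp.degree_eq_weight_one]
      exact hp (MvPolynomial.mem_support_iff.1 hd))
    exact Finset.mem_image.2 ⟨i, Finset.mem_univ i, rfl⟩
  rw [Finset.sum_subset hsub (fun d _ hd => by
    rw [MvPolynomial.notMem_support_iff.1 hd, zero_mul])]
  rw [Finset.sum_image (fun i _ j _ h => by
    by_contra hne
    have := Finsupp.ext_iff.1 h i
    rw [Finsupp.single_eq_same, Finsupp.single_eq_of_ne' (Ne.symm hne)] at this
    exact one_ne_zero this)]
  refine Finset.sum_congr rfl fun i _ => ?_
  congr 1
  rw [Finsupp.support_single_ne_zero i one_ne_zero]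
  simp

end Poly

/-! ### The main helper theorem -/

theorem helper (m : ℕ) (c : Fin 4 → ℝ) (i₀ : Fin 4) (hc : c i₀ ≠ 0) (T : Set ℝ)
    (hTo : IsOpen T) (hTc : Convex ℝ T) (hT0 : ∀ r ∈ T, 0 < r)
    (f : ℝ → EuclideanSpace ℝ (Fin m)) (hf : ContDiffOn ℝ 6 f T)
    (hu : ∀ x : EuclideanSpace ℝ (Fin 4), ‖x‖ ∈ T →
      lap (lap (lap (fun y => Xf c (‖y‖⁻¹ • y) • f ‖y‖))) x = 0) :
    ∃ B : Fin 6 → EuclideanSpace ℝ (Fin m), ∀ r ∈ T,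
      f r = (r ^ 3)⁻¹ • B 0 + r⁻¹ • B 1 + r • B 2 + (r * Real.log r) • B 3 +
        r ^ 3 • B 4 + r ^ 5 • B 5 := by
  classical
  set S : Set ℝ := Ioi (0:ℝ) ∩ Real.sqrt ⁻¹' T with hSdef
  have hSo : IsOpen S := isOpen_Ioi.inter (hTo.preimage Real.continuous_sqrt)
  have hSc : Convex ℝ S := by
    rw [convex_iff_ordConnected]
    constructor
    intro a ha b hb z hz
    exact ⟨lt_of_lt_of_le ha.1 hz.1,
      hTc.ordConnected.out ha.2 hb.2 ⟨Real.sqrt_le_sqrt hz.1, Real.sqrt_le_sqrt hz.2⟩⟩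
  have hpos : ∀ s ∈ S, (0:ℝ) < s := fun s hs => hs.1
  have hqf_eq : ∀ y : EuclideanSpace ℝ (Fin 4), qf y = ‖y‖^2 := by
    intro y
    rw [EuclideanSpace.norm_eq, Real.sq_sqrt (by positivity)]
    simp [qf, sq_abs, pow_two]
  have hOmem : ∀ y : EuclideanSpace ℝ (Fin 4), ‖y‖ ∈ T → qf y ∈ S := by
    intro y h
    have h0 : 0 < ‖y‖ := hT0 _ h
    refine ⟨Set.mem_Ioi.2 (by rw [hqf_eq]; exact pow_pos h0 2), ?_⟩
    show Real.sqrt (qf y) ∈ T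
    rw [hqf_eq, Real.sqrt_sq (norm_nonneg y)]
    exact h
  set G : ℝ → EuclideanSpace ℝ (Fin m) :=
    fun s => (Real.sqrt s)⁻¹ • f (Real.sqrt s) with hGdef
  have hGc : ContDiffOn ℝ 6 G S := by
    have hsq : ContDiffOn ℝ 6 Real.sqrt S := fun s hs =>
      (Real.contDiffAt_sqrt (ne_of_gt hs.1)).contDiffWithinAt
    have h1 : ContDiffOn ℝ 6 (fun s => (Real.sqrt s)⁻¹) S :=
      hsq.inv (fun s hs => (Real.sqrt_pos.2 hs.1).ne')
    have h2 : ContDiffOn ℝ 6 (fun s => f (Real.sqrt s)) S :=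
      ContDiffOn.comp hf hsq (fun s hs => hs.2)
    exact h1.smul h2
  -- derivative chain
  set g1 := deriv G with hg1def
  set g2 := deriv g1 with hg2def
  set g3 := deriv g2 with hg3def
  set g4 := deriv g3 with hg4def
  set g5 := deriv g4 with hg5def
  set g6 := deriv g5 with hg6def
  have c1 : ContDiffOn ℝ 5 g1 S := hGc.deriv_of_isOpen hSo (by norm_num)
  have c2 : ContDiffOn ℝ 4 g2 S := c1.deriv_of_isOpen hSo (by norm_num)
  have c3 : ContDiffOn ℝ 3 g3 S := c2.deriv_of_isOpen hSo (by norm_num)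
  have c4 : ContDiffOn ℝ 2 g4 S := c3.deriv_of_isOpen hSo (by norm_num)
  have c5 : ContDiffOn ℝ 1 g5 S := c4.deriv_of_isOpen hSo (by norm_num)
  have hg1 : ∀ s ∈ S, HasDerivAt G (g1 s) s := fun s hs =>
    ((hGc.differentiableOn (by norm_num)).differentiableAt (hSo.mem_nhds hs)).hasDerivAt
  have hg2 : ∀ s ∈ S, HasDerivAt g1 (g2 s) s := fun s hs =>
    ((c1.differentiableOn (by norm_num)).differentiableAt (hSo.mem_nhds hs)).hasDerivAt
  have hg3 : ∀ s ∈ S, HasDerivAt g2 (g3 s) s := fun s hs =>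
    ((c2.differentiableOn (by norm_num)).differentiableAt (hSo.mem_nhds hs)).hasDerivAt
  have hg4 : ∀ s ∈ S, HasDerivAt g3 (g4 s) s := fun s hs =>
    ((c3.differentiableOn (by norm_num)).differentiableAt (hSo.mem_nhds hs)).hasDerivAt
  have hg5 : ∀ s ∈ S, HasDerivAt g4 (g5 s) s := fun s hs =>
    ((c4.differentiableOn (by norm_num)).differentiableAt (hSo.mem_nhds hs)).hasDerivAt
  have hg6 : ∀ s ∈ S, HasDerivAt g5 (g6 s) s := fun s hs =>
    ((c5.differentiableOn (by norm_num)).differentiableAt (hSo.mem_nhds hs)).hasDerivAt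
  have h4s : ∀ s : ℝ, HasDerivAt (fun t : ℝ => 4 * t) 4 s := fun s => by
    simpa using (hasDerivAt_id s).const_mul (4:ℝ)
  -- iterated radial operators
  set H1 : ℝ → EuclideanSpace ℝ (Fin m) := fun s => (12:ℝ) • g1 s + (4*s) • g2 s with hH1def
  set H1d1 : ℝ → EuclideanSpace ℝ (Fin m) := fun s => (16:ℝ) • g2 s + (4*s) • g3 s with hH1d1def
  set H1d2 : ℝ → EuclideanSpace ℝ (Fin m) := fun s => (20:ℝ) • g3 s + (4*s) • g4 s with hH1d2def
  set H1d3 : ℝ → EuclideanSpace ℝ (Fin m) := fun s => (24:ℝ) • g4 s + (4*s) • g5 s with hH1d3def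
  set H1d4 : ℝ → EuclideanSpace ℝ (Fin m) := fun s => (28:ℝ) • g5 s + (4*s) • g6 s with hH1d4def
  set H2 : ℝ → EuclideanSpace ℝ (Fin m) := fun s => (12:ℝ) • H1d1 s + (4*s) • H1d2 s with hH2def
  set H2d1 : ℝ → EuclideanSpace ℝ (Fin m) :=
    fun s => (16:ℝ) • H1d2 s + (4*s) • H1d3 s with hH2d1def
  set H2d2 : ℝ → EuclideanSpace ℝ (Fin m) :=
    fun s => (20:ℝ) • H1d3 s + (4*s) • H1d4 s with hH2d2def
  have hH1 : ∀ s ∈ S, HasDerivAt H1 (H1d1 s) s := by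
    intro s hs
    have h := ((hg2 s hs).const_smul (12:ℝ)).fun_add ((h4s s).fun_smul (hg3 s hs))
    exact hasDerivAt_congr_d h (by
      rw [hH1d1def]
      match_scalars <;> ring)
  have hH1d1 : ∀ s ∈ S, HasDerivAt H1d1 (H1d2 s) s := by
    intro s hs
    have h := ((hg3 s hs).const_smul (16:ℝ)).fun_add ((h4s s).fun_smul (hg4 s hs))
    exact hasDerivAt_congr_d h (by
      rw [hH1d2def]
      match_scalars <;> ring)
  have hH1d2 : ∀ s ∈ S, HasDerivAt H1d2 (H1d3 s) s := by
    intro s hs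
    have h := ((hg4 s hs).const_smul (20:ℝ)).fun_add ((h4s s).fun_smul (hg5 s hs))
    exact hasDerivAt_congr_d h (by
      rw [hH1d3def]
      match_scalars <;> ring)
  have hH1d3 : ∀ s ∈ S, HasDerivAt H1d3 (H1d4 s) s := by
    intro s hs
    have h := ((hg5 s hs).const_smul (24:ℝ)).fun_add ((h4s s).fun_smul (hg6 s hs))
    exact hasDerivAt_congr_d h (by
      rw [hH1d4def]
      match_scalars <;> ring)
  have hH2 : ∀ s ∈ S, HasDerivAt H2 (H2d1 s) s := by
    intro s hs
    have h := ((hH1d1 s hs).const_smul (12:ℝ)).fun_add ((h4s s).fun_smul (hH1d2 s hs))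
    exact hasDerivAt_congr_d h (by
      rw [hH2d1def]
      match_scalars <;> ring)
  have hH2d1 : ∀ s ∈ S, HasDerivAt H2d1 (H2d2 s) s := by
    intro s hs
    have h := ((hH1d2 s hs).const_smul (16:ℝ)).fun_add ((h4s s).fun_smul (hH1d3 s hs))
    exact hasDerivAt_congr_d h (by
      rw [hH2d2def]
      match_scalars <;> ring)
  -- lap computations on the annulus
  set O := {y : EuclideanSpace ℝ (Fin 4) | qf y ∈ S} with hOdef
  have hO : IsOpen O := hSo.preimage continuous_qf
  set ψ := fun y : EuclideanSpace ℝ (Fin 4) => Xf c (‖y‖⁻¹ • y) • f ‖y‖ with hψdef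
  have hψeq : ∀ y ∈ O, ψ y = Xf c y • G (qf y) := by
    intro y hy
    have hsqy : Real.sqrt (qf y) = ‖y‖ := by
      rw [hqf_eq, Real.sqrt_sq (norm_nonneg y)]
    have hyT : ‖y‖ ∈ T := by
      have := hy.2
      rwa [Set.mem_preimage, hsqy] at this
    have hy0 : 0 < ‖y‖ := hT0 _ hyT
    rw [hψdef, hGdef]
    show Xf c (‖y‖⁻¹ • y) • f ‖y‖
        = Xf c y • ((Real.sqrt (qf y))⁻¹ • f (Real.sqrt (qf y)))
    rw [hsqy]
    have hXs : Xf c (‖y‖⁻¹ • y) = ‖y‖⁻¹ * Xf c y := by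
      simp only [Xf, PiLp.smul_apply, smul_eq_mul, Finset.mul_sum]
      exact Finset.sum_congr rfl fun i _ => by ring
    rw [hXs, mul_comm, mul_smul]
  have l1 : ∀ y ∈ O, lap ψ y = Xf c y • H1 (qf y) := fun y hy =>
    (lap_congr O hO ψ _ hψeq hy).trans (lap_shape hSo hg1 hg2 hy)
  have l2 : ∀ y ∈ O, lap (lap ψ) y = Xf c y • H2 (qf y) := fun y hy =>
    (lap_congr O hO _ _ l1 hy).trans (lap_shape hSo hH1 hH1d1 hy)
  have l3 : ∀ y ∈ O, lap (lap (lap ψ)) y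
      = Xf c y • ((12:ℝ) • H2d1 (qf y) + (4 * qf y) • H2d2 (qf y)) := fun y hy =>
    (lap_congr O hO _ _ l2 hy).trans (lap_shape hSo hH2 hH2d1 hy)
  -- extract the ODE
  have heqODE : ∀ s ∈ S, (12:ℝ) • H2d1 s + (4*s) • H2d2 s = 0 := by
    intro s hs
    have hr0 : 0 < Real.sqrt s := Real.sqrt_pos.2 hs.1
    set x : EuclideanSpace ℝ (Fin 4) := EuclideanSpace.single i₀ (Real.sqrt s) with hxdef
    have hxn : ‖x‖ = Real.sqrt s := by
      rw [hxdef, EuclideanSpace.norm_single, Real.norm_eq_abs, abs_of_pos hr0]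
    have hxT : ‖x‖ ∈ T := by rw [hxn]; exact hs.2
    have hxO : x ∈ O := hOmem x hxT
    have hqx : qf x = s := by rw [hqf_eq, hxn, Real.sq_sqrt hs.1.le]
    have h0 := hu x hxT
    rw [l3 x hxO, hqx] at h0
    have hXx : Xf c x ≠ 0 := by
      have : Xf c x = c i₀ * Real.sqrt s := by
        simp [Xf, hxdef, EuclideanSpace.single_apply, mul_ite, Finset.sum_ite_eq]
      rw [this]
      exact mul_ne_zero hc hr0.ne'
    exact (smul_eq_zero.1 h0).resolve_left hXx
  -- Stage A : H2
  obtain ⟨A0, A1, hstA⟩ := solve_step S hSo hSc hpos H2 H2d1 H2d2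
    (fun _ => 0) (fun _ => 0) (fun _ => 0) hH2 hH2d1 heqODE
    (fun s hs => by simpa using hasDerivAt_const s (0 : EuclideanSpace ℝ (Fin m)))
    (fun s hs => by simpa using hasDerivAt_const s (0 : EuclideanSpace ℝ (Fin m)))
  set P0 := A1 with hP0def
  set P1 := (-(1:ℝ)/2) • A0 with hP1def
  have hH2eq : ∀ s ∈ S, H2 s = P0 + (s^2)⁻¹ • P1 := by
    intro s hs
    rw [hstA s hs, hP0def, hP1def]
    match_scalars <;> ring
  -- Stage B : H1
  obtain ⟨A2, A3, hstB⟩ := solve_step S hSo hSc hpos H1 H1d1 H1d2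
    (fun s => P0 + (s^2)⁻¹ • P1)
    (fun s => (s^3/12) • P0 + (s/4) • P1)
    (fun s => (s/12) • P0 + (-(1:ℝ)/4 * s⁻¹) • P1)
    hH1 hH1d1
    (fun s hs => hH2eq s hs)
    (fun s hs => by
      have hs0 : s ≠ 0 := (hpos s hs).ne'
      have h := (((hasDerivAt_pow 3 s).div_const 12).smul_const P0).add
        (((hasDerivAt_id s).div_const 4).smul_const P1)
      exact hasDerivAt_congr_d h (by
        match_scalars <;> push_cast <;> (try field_simp) <;> ring))
    (fun s hs => by
      have hs0 : s ≠ 0 := (hpos s hs).ne'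
      have h := (((hasDerivAt_id s).div_const 12).smul_const P0).add
        (((hasDerivAt_inv hs0).const_mul (-(1:ℝ)/4)).smul_const P1)
      exact hasDerivAt_congr_d h (by
        match_scalars <;> push_cast <;> (try field_simp) <;> ring))
  set Q0 := A3 with hQ0def
  set Q1 := (-(1:ℝ)/2) • A2 with hQ1def
  set Q2 := (1/12 : ℝ) • P0 with hQ2def
  set Q3 := (-(1:ℝ)/4) • P1 with hQ3def
  have hH1eq : ∀ s ∈ S, H1 s = Q0 + (s^2)⁻¹ • Q1 + s • Q2 + s⁻¹ • Q3 := by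
    intro s hs
    rw [hstB s hs, hQ0def, hQ1def, hQ2def, hQ3def]
    match_scalars <;> ring
  -- Stage C : G
  obtain ⟨A4, A5, hstC⟩ := solve_step S hSo hSc hpos G g1 g2
    (fun s => Q0 + (s^2)⁻¹ • Q1 + s • Q2 + s⁻¹ • Q3)
    (fun s => (s^3/12) • Q0 + (s/4) • Q1 + (s^4/16) • Q2 + (s^2/8) • Q3)
    (fun s => (s/12) • Q0 + (-(1:ℝ)/4 * s⁻¹) • Q1 + (s^2/32) • Q2 + (1/8 * Real.log s) • Q3)
    hg1 hg2
    (fun s hs => hH1eq s hs)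
    (fun s hs => by
      have hs0 : s ≠ 0 := (hpos s hs).ne'
      have h := (((((hasDerivAt_pow 3 s).div_const 12).smul_const Q0).add
        (((hasDerivAt_id s).div_const 4).smul_const Q1)).add
        (((hasDerivAt_pow 4 s).div_const 16).smul_const Q2)).add
          (((hasDerivAt_pow 2 s).div_const 8).smul_const Q3)
      exact hasDerivAt_congr_d h (by
        match_scalars <;> push_cast <;> (try field_simp) <;> ring))
    (fun s hs => by
      have hs0 : s ≠ 0 := (hpos s hs).ne'
      have hspos : 0 < s := hpos s hs
      have h := (((((hasDerivAt_id s).div_const 12).smul_const Q0).add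
        (((hasDerivAt_inv hs0).const_mul (-(1:ℝ)/4)).smul_const Q1)).add
        (((hasDerivAt_pow 2 s).div_const 32).smul_const Q2)).add
          (((Real.hasDerivAt_log hs0).const_mul (1/8 : ℝ)).smul_const Q3)
      exact hasDerivAt_congr_d h (by
        match_scalars <;> push_cast <;> (try field_simp) <;> ring))
  set D0 := A5 with hD0def
  set D1 := (-(1:ℝ)/2) • A4 with hD1def
  set D2 := (1/12 : ℝ) • Q0 with hD2def
  set D3 := (-(1:ℝ)/4) • Q1 with hD3def
  set D4 := (1/32 : ℝ) • Q2 with hD4def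
  set D5 := (1/8 : ℝ) • Q3 with hD5def
  have hGeq : ∀ s ∈ S, G s = D0 + (s^2)⁻¹ • D1 + s • D2 + s⁻¹ • D3 + s^2 • D4
      + Real.log s • D5 := by
    intro s hs
    rw [hstC s hs, hD0def, hD1def, hD2def, hD3def, hD4def, hD5def]
    match_scalars <;> ring
  -- conclusion
  refine ⟨![D1, D3, D0, (2:ℝ) • D5, D2, D4], fun r hr => ?_⟩
  have hr0 : 0 < r := hT0 r hr
  have hrS : r^2 ∈ S := by
    refine ⟨Set.mem_Ioi.2 (by positivity), ?_⟩
    show Real.sqrt (r^2) ∈ T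
    rwa [Real.sqrt_sq hr0.le]
  have hfr : f r = r • G (r^2) := by
    rw [hGdef]
    show f r = r • ((Real.sqrt (r^2))⁻¹ • f (Real.sqrt (r^2)))
    rw [Real.sqrt_sq hr0.le, smul_inv_smul₀ hr0.ne']
  have hlog : Real.log (r^2) = 2 * Real.log r := by
    rw [Real.log_pow]; push_cast; ring
  have e0 : (![D1, D3, D0, (2:ℝ) • D5, D2, D4] :
      Fin 6 → EuclideanSpace ℝ (Fin m)) 0 = D1 := rfl
  have e1 : (![D1, D3, D0, (2:ℝ) • D5, D2, D4] :
      Fin 6 → EuclideanSpace ℝ (Fin m)) 1 = D3 := rfl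
  have e2 : (![D1, D3, D0, (2:ℝ) • D5, D2, D4] :
      Fin 6 → EuclideanSpace ℝ (Fin m)) 2 = D0 := rfl
  have e3 : (![D1, D3, D0, (2:ℝ) • D5, D2, D4] :
      Fin 6 → EuclideanSpace ℝ (Fin m)) 3 = (2:ℝ) • D5 := rfl
  have e4 : (![D1, D3, D0, (2:ℝ) • D5, D2, D4] :
      Fin 6 → EuclideanSpace ℝ (Fin m)) 4 = D2 := rfl
  have e5 : (![D1, D3, D0, (2:ℝ) • D5, D2, D4] :
      Fin 6 → EuclideanSpace ℝ (Fin m)) 5 = D4 := rfl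
  rw [e0, e1, e2, e3, e4, e5, hfr, hGeq (r^2) hrS, hlog]
  have hrne : r ≠ 0 := hr0.ne'
  match_scalars <;> (try field_simp) <;> ring

theorem stmt1 (m : ℕ) (hm : 1 ≤ m) (τ : ℝ) (σ : EReal) (hτ : 0 ≤ τ) (hτσ : (τ : EReal) < σ)
    (X : EuclideanSpace ℝ (Fin 4) → ℝ) (hX : IsHarmonicHomog 1 X) (hX0 : X ≠ 0)
    (f : ℝ → EuclideanSpace ℝ (Fin m))
    (hf : ContDiffOn ℝ 6 f {r : ℝ | τ < r ∧ (r : EReal) < σ})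
    (hu : ∀ x : EuclideanSpace ℝ (Fin 4), τ < ‖x‖ → (‖x‖ : EReal) < σ →
      lap (lap (lap (fun y => X (‖y‖⁻¹ • y) • f ‖y‖))) x = 0) :
    ∃ B : Fin 6 → EuclideanSpace ℝ (Fin m), ∀ r : ℝ, τ < r → (r : EReal) < σ →
      f r = (r ^ 3)⁻¹ • B 0 + r⁻¹ • B 1 + r • B 2 + (r * Real.log r) • B 3 +
        r ^ 3 • B 4 + r ^ 5 • B 5 := by
  classical
  obtain ⟨⟨p, hp, hval⟩, -⟩ := hX
  set c : Fin 4 → ℝ := fun i => MvPolynomial.coeff (Finsupp.single i 1) p with hcdef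
  have hlin : ∀ y : EuclideanSpace ℝ (Fin 4), X y = Xf c y := by
    intro y
    rw [hval y, homog_one_eval p hp]
    rfl
  have hex : ∃ i₀, c i₀ ≠ 0 := by
    by_contra h
    push_neg at h
    apply hX0
    funext y
    rw [hlin y]
    simp only [Xf]
    rw [Finset.sum_eq_zero (fun i _ => by rw [h i, zero_mul])]
    rfl
  obtain ⟨i₀, hi₀⟩ := hex
  -- case on σ
  induction σ using EReal.rec with
  | bot => exact absurd hτσ (by simp)
  | coe b =>
    have hτb : τ < b := by exact_mod_cast hτσ
    have hset : {r : ℝ | τ < r ∧ (r : EReal) < (b:EReal)} = Ioo τ b := by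
      ext r; simp [EReal.coe_lt_coe_iff]
    have hT0 : ∀ r ∈ Ioo τ b, (0:ℝ) < r := fun r hr => lt_of_le_of_lt hτ hr.1
    have hfun : (fun y : EuclideanSpace ℝ (Fin 4) => X (‖y‖⁻¹ • y) • f ‖y‖)
        = fun y => Xf c (‖y‖⁻¹ • y) • f ‖y‖ := by
      funext y; rw [hlin]
    obtain ⟨B, hB⟩ := helper m c i₀ hi₀ (Ioo τ b) isOpen_Ioo (convex_Ioo τ b) hT0 f
      (by rwa [hset] at hf)
      (fun x hx => by
        rw [← hfun]
        exact hu x hx.1 (by exact_mod_cast hx.2))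
    exact ⟨B, fun r h1 h2 => hB r ⟨h1, by exact_mod_cast h2⟩⟩
  | top =>
    have hset : {r : ℝ | τ < r ∧ (r : EReal) < ⊤} = Ioi τ := by
      ext r; simp [EReal.coe_lt_top]
    have hT0 : ∀ r ∈ Ioi τ, (0:ℝ) < r := fun r hr => lt_of_le_of_lt hτ hr
    have hfun : (fun y : EuclideanSpace ℝ (Fin 4) => X (‖y‖⁻¹ • y) • f ‖y‖)
        = fun y => Xf c (‖y‖⁻¹ • y) • f ‖y‖ := by
      funext y; rw [hlin]
    obtain ⟨B, hB⟩ := helper m c i₀ hi₀ (Ioi τ) isOpen_Ioi (convex_Ioi τ) hT0 f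
      (by rwa [hset] at hf)
      (fun x hx => by
        rw [← hfun]
        exact hu x hx (EReal.coe_lt_top _))
    exact ⟨B, fun r h1 _ => hB r h1⟩
end
end

section
/- Fix m ≥ 1 and a, b ∈ ℝ^m. For γ ∈ (0,1) let M^h(γ) be the 6×6 real matrix whose rows are H(γ), H'(γ), H''(γ), H(1), H'(1), H''(1), where H(r) = (r^{-5}, r^{-3}, r^{-1}, r³, r⁵, r⁷) and primes denote derivatives in r. Then for all sufficiently small γ > 0 the matrix M^h(γ) is invertible, and the unique solution (D₁(γ),…,D₆(γ)) ∈ (ℝ^m)⁶ of the componentwise linear system M^h(γ)·(D₁,…,D₆)ᵀ = (a/(6γ), −a/(6γ²), a/(3γ³), b/6, b/2, b)ᵀ satisfies, as γ → 0⁺: D₁ = (3a − b/2)γ⁸ + O(γ¹⁰), D₂ = (−8a + (4/3)b)γ⁶ + O(γ⁸), D₃ = (1/6)(1+36γ⁴)a − γ⁴ b + O(γ⁶), D₄ = (−a + b/6)(1+36γ⁴) + O(γ⁶), D₅ = (4/3)(1+36γ⁴)a − 8γ⁴ b + O(γ⁶), D₆ = −(1/2)(1+36γ⁴)a + 3γ⁴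 b + O(γ⁶). -/
open Matrix

noncomputable section

/-- `H(r) = (r⁻⁵, r⁻³, r⁻¹, r³, r⁵, r⁷)`. -/
def Hvec (r : ℝ) : Fin 6 → ℝ :=
  ![(r ^ 5)⁻¹, (r ^ 3)⁻¹, r⁻¹, r ^ 3, r ^ 5, r ^ 7]

/-- The 6×6 matrix whose rows are `H(γ), H'(γ), H''(γ), H(1), H'(1), H''(1)`. -/
def Mh (γ : ℝ) : Matrix (Fin 6) (Fin 6) ℝ := Matrix.of
  ![Hvec γ,
    fun j => deriv (fun r => Hvec r j) γ,
    fun j => deriv (deriv (fun r => Hvec r j)) γ,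
    Hvec 1,
    fun j => deriv (fun r => Hvec r j) 1,
    fun j => deriv (deriv (fun r => Hvec r j)) 1]

lemma hasDerivAt_invPow (n : ℕ) (x : ℝ) (hx : x ≠ 0) :
    HasDerivAt (fun r : ℝ => (r ^ n)⁻¹) (-(n : ℝ) * (x ^ (n + 1))⁻¹) x := by
  cases n with
  | zero => simpa using hasDerivAt_const x (1 : ℝ)
  | succ k =>
    have h := (hasDerivAt_pow (k + 1) x).inv (pow_ne_zero _ hx)
    refine h.congr_deriv ?_
    simp only [Nat.add_sub_cancel]
    field_simp
    ring

def H1 (x : ℝ) : Fin 6 → ℝ :=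
  ![-5 * (x ^ 6)⁻¹, -3 * (x ^ 4)⁻¹, -1 * (x ^ 2)⁻¹, 3 * x ^ 2, 5 * x ^ 4, 7 * x ^ 6]

def H2 (x : ℝ) : Fin 6 → ℝ :=
  ![30 * (x ^ 7)⁻¹, 12 * (x ^ 5)⁻¹, 2 * (x ^ 3)⁻¹, 6 * x, 20 * x ^ 3, 42 * x ^ 5]

lemma deriv_Hvec (j : Fin 6) (x : ℝ) (hx : x ≠ 0) :
    deriv (fun r => Hvec r j) x = H1 x j := by
  fin_cases j
  · show deriv (fun r : ℝ => (r ^ 5)⁻¹) x = -5 * (x ^ 6)⁻¹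
    rw [(hasDerivAt_invPow 5 x hx).deriv]; push_cast; ring
  · show deriv (fun r : ℝ => (r ^ 3)⁻¹) x = -3 * (x ^ 4)⁻¹
    rw [(hasDerivAt_invPow 3 x hx).deriv]; push_cast; ring
  · show deriv (fun r : ℝ => r⁻¹) x = -1 * (x ^ 2)⁻¹
    rw [deriv_inv]; ring
  · show deriv (fun r : ℝ => r ^ 3) x = 3 * x ^ 2
    rw [deriv_pow_field]; push_cast; ring
  · show deriv (fun r : ℝ => r ^ 5) x = 5 * x ^ 4
    rw [deriv_pow_field]; push_cast; ring
  · show deriv (fun r : ℝ => r ^ 7) x = 7 * x ^ 6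
    rw [deriv_pow_field]; push_cast; ring

lemma deriv2_Hvec (j : Fin 6) (x : ℝ) (hx : x ≠ 0) :
    deriv (deriv (fun r => Hvec r j)) x = H2 x j := by
  have hev : deriv (fun r => Hvec r j) =ᶠ[nhds x] (fun y => H1 y j) := by
    filter_upwards [eventually_ne_nhds hx] with y hy
    exact deriv_Hvec j y hy
  rw [hev.deriv_eq]
  fin_cases j
  · show deriv (fun y : ℝ => -5 * (y ^ 6)⁻¹) x = 30 * (x ^ 7)⁻¹
    rw [((hasDerivAt_invPow 6 x hx).const_mul (-5 : ℝ)).deriv]; push_cast; ring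
  · show deriv (fun y : ℝ => -3 * (y ^ 4)⁻¹) x = 12 * (x ^ 5)⁻¹
    rw [((hasDerivAt_invPow 4 x hx).const_mul (-3 : ℝ)).deriv]; push_cast; ring
  · show deriv (fun y : ℝ => -1 * (y ^ 2)⁻¹) x = 2 * (x ^ 3)⁻¹
    rw [((hasDerivAt_invPow 2 x hx).const_mul (-1 : ℝ)).deriv]; push_cast; ring
  · show deriv (fun y : ℝ => 3 * y ^ 2) x = 6 * x
    rw [((hasDerivAt_pow 2 x).const_mul (3 : ℝ)).deriv]; push_cast; ring
  · show deriv (fun y : ℝ => 5 * y ^ 4) x = 20 * x ^ 3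
    rw [((hasDerivAt_pow 4 x).const_mul (5 : ℝ)).deriv]; push_cast; ring
  · show deriv (fun y : ℝ => 7 * y ^ 6) x = 42 * x ^ 5
    rw [((hasDerivAt_pow 6 x).const_mul (7 : ℝ)).deriv]; push_cast; ring

lemma Mh_eq (r : ℝ) (hr : r ≠ 0) : Mh r = Matrix.of
    ![Hvec r, H1 r, H2 r, Hvec 1, H1 1, H2 1] := by
  ext i j
  fin_cases i
  · rfl
  · exact deriv_Hvec j r hr
  · exact deriv2_Hvec j r hr
  · rfl
  · exact deriv_Hvec j 1 one_ne_zero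
  · exact deriv2_Hvec j 1 one_ne_zero

section vecsimp
variable {α : Type*}
lemma vec6_0 (x0 x1 x2 x3 x4 x5 : α) : ![x0,x1,x2,x3,x4,x5] (0 : Fin 6) = x0 := rfl
lemma vec6_mk0 (x0 x1 x2 x3 x4 x5 : α) (h : (0:ℕ) < 6) : ![x0,x1,x2,x3,x4,x5] (⟨0, h⟩ : Fin 6) = x0 := rfl
lemma vec6_1 (x0 x1 x2 x3 x4 x5 : α) : ![x0,x1,x2,x3,x4,x5] (1 : Fin 6) = x1 := rfl
lemma vec6_mk1 (x0 x1 x2 x3 x4 x5 : α) (h : (1:ℕ) < 6) : ![x0,x1,x2,x3,x4,x5] (⟨1, h⟩ : Fin 6) = x1 := rfl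
lemma vec6_2 (x0 x1 x2 x3 x4 x5 : α) : ![x0,x1,x2,x3,x4,x5] (2 : Fin 6) = x2 := rfl
lemma vec6_mk2 (x0 x1 x2 x3 x4 x5 : α) (h : (2:ℕ) < 6) : ![x0,x1,x2,x3,x4,x5] (⟨2, h⟩ : Fin 6) = x2 := rfl
lemma vec6_3 (x0 x1 x2 x3 x4 x5 : α) : ![x0,x1,x2,x3,x4,x5] (3 : Fin 6) = x3 := rfl
lemma vec6_mk3 (x0 x1 x2 x3 x4 x5 : α) (h : (3:ℕ) < 6) : ![x0,x1,x2,x3,x4,x5] (⟨3, h⟩ : Fin 6) = x3 := rfl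
lemma vec6_4 (x0 x1 x2 x3 x4 x5 : α) : ![x0,x1,x2,x3,x4,x5] (4 : Fin 6) = x4 := rfl
lemma vec6_mk4 (x0 x1 x2 x3 x4 x5 : α) (h : (4:ℕ) < 6) : ![x0,x1,x2,x3,x4,x5] (⟨4, h⟩ : Fin 6) = x4 := rfl
lemma vec6_5 (x0 x1 x2 x3 x4 x5 : α) : ![x0,x1,x2,x3,x4,x5] (5 : Fin 6) = x5 := rfl
lemma vec6_mk5 (x0 x1 x2 x3 x4 x5 : α) (h : (5:ℕ) < 6) : ![x0,x1,x2,x3,x4,x5] (⟨5, h⟩ : Fin 6) = x5 := rfl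
end vecsimp

attribute [local simp] vec6_0 vec6_1 vec6_2 vec6_3 vec6_4 vec6_5
  vec6_mk0 vec6_mk1 vec6_mk2 vec6_mk3 vec6_mk4 vec6_mk5


def Ms (r : ℝ) : Matrix (Fin 6) (Fin 6) ℝ := Matrix.of
  ![![r^2, r^4, r^6, r^10, r^12, r^14],
    ![-5*r, -3*r^3, -1*r^5, 3*r^9, 5*r^11, 7*r^13],
    ![30, 12*r^2, 2*r^4, 6*r^8, 20*r^10, 42*r^12],
    ![1,1,1,1,1,1],
    ![-5,-3,-1,3,5,7],
    ![30,12,2,6,20,42]]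

def pD (x : ℝ) : ℝ := 1 - 36*x^4 + 160*x^6 - 315*x^8 + 288*x^10 - 288*x^14 + 315*x^16 - 160*x^18 + 36*x^20 - x^24

set_option maxHeartbeats 4000000 in
set_option maxRecDepth 100000 in
lemma det_Ms (r : ℝ) : (Ms r).det = 256 * r^9 * pD r := by
  simp only [Ms, Matrix.det_succ_row_zero, Fin.sum_univ_succ, Fin.sum_univ_zero,
    Matrix.submatrix_apply, Matrix.det_fin_zero, Matrix.det_fin_one,
    Matrix.cons_val_zero, Matrix.cons_val_one, Matrix.head_cons, Matrix.head_fin_const,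
    Matrix.of_apply, Fin.val_zero, Fin.val_succ, Fin.succAbove,
    Matrix.cons_val_succ, Fin.castSucc, Fin.castAdd, Fin.castLE, Fin.lt_def, Fin.succ]
  norm_num [pD]
  ring

set_option maxHeartbeats 1000000 in
lemma Mh_factor (γ : ℝ) (h0 : γ ≠ 0) :
    Mh γ = Matrix.diagonal ![(γ^7)⁻¹,(γ^7)⁻¹,(γ^7)⁻¹,1,1,1] * Ms γ := by
  rw [Mh_eq γ h0]
  ext i j
  rw [Matrix.diagonal_mul]
  fin_cases i <;> fin_cases j
  · show (γ ^ 5)⁻¹ = (γ^7)⁻¹ * (γ^2)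
    field_simp; try ring
  · show (γ ^ 3)⁻¹ = (γ^7)⁻¹ * (γ^4)
    field_simp; try ring
  · show γ⁻¹ = (γ^7)⁻¹ * (γ^6)
    field_simp; try ring
  · show γ ^ 3 = (γ^7)⁻¹ * (γ^10)
    field_simp; try ring
  · show γ ^ 5 = (γ^7)⁻¹ * (γ^12)
    field_simp; try ring
  · show γ ^ 7 = (γ^7)⁻¹ * (γ^14)
    field_simp; try ring
  · show -5 * (γ ^ 6)⁻¹ = (γ^7)⁻¹ * (-5*γ)
    field_simp; try ring
  · show -3 * (γ ^ 4)⁻¹ = (γ^7)⁻¹ * (-3*γ^3)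
    field_simp; try ring
  · show -1 * (γ ^ 2)⁻¹ = (γ^7)⁻¹ * (-1*γ^5)
    field_simp; try ring
  · show 3 * γ ^ 2 = (γ^7)⁻¹ * (3*γ^9)
    field_simp; try ring
  · show 5 * γ ^ 4 = (γ^7)⁻¹ * (5*γ^11)
    field_simp; try ring
  · show 7 * γ ^ 6 = (γ^7)⁻¹ * (7*γ^13)
    field_simp; try ring
  · show 30 * (γ ^ 7)⁻¹ = (γ^7)⁻¹ * (30)
    field_simp; try ring
  · show 12 * (γ ^ 5)⁻¹ = (γ^7)⁻¹ * (12*γ^2)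
    field_simp; try ring
  · show 2 * (γ ^ 3)⁻¹ = (γ^7)⁻¹ * (2*γ^4)
    field_simp; try ring
  · show 6 * γ = (γ^7)⁻¹ * (6*γ^8)
    field_simp; try ring
  · show 20 * γ ^ 3 = (γ^7)⁻¹ * (20*γ^10)
    field_simp; try ring
  · show 42 * γ ^ 5 = (γ^7)⁻¹ * (42*γ^12)
    field_simp; try ring
  · show ((1:ℝ) ^ 5)⁻¹ = (1:ℝ) * (1)
    norm_num
  · show ((1:ℝ) ^ 3)⁻¹ = (1:ℝ) * (1)
    norm_num
  · show (1:ℝ)⁻¹ = (1:ℝ) * (1)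
    norm_num
  · show (1:ℝ) ^ 3 = (1:ℝ) * (1)
    norm_num
  · show (1:ℝ) ^ 5 = (1:ℝ) * (1)
    norm_num
  · show (1:ℝ) ^ 7 = (1:ℝ) * (1)
    norm_num
  · show -5 * ((1:ℝ) ^ 6)⁻¹ = (1:ℝ) * (-5)
    norm_num
  · show -3 * ((1:ℝ) ^ 4)⁻¹ = (1:ℝ) * (-3)
    norm_num
  · show -1 * ((1:ℝ) ^ 2)⁻¹ = (1:ℝ) * (-1)
    norm_num
  · show 3 * (1:ℝ) ^ 2 = (1:ℝ) * (3)
    norm_num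
  · show 5 * (1:ℝ) ^ 4 = (1:ℝ) * (5)
    norm_num
  · show 7 * (1:ℝ) ^ 6 = (1:ℝ) * (7)
    norm_num
  · show 30 * ((1:ℝ) ^ 7)⁻¹ = (1:ℝ) * (30)
    norm_num
  · show 12 * ((1:ℝ) ^ 5)⁻¹ = (1:ℝ) * (12)
    norm_num
  · show 2 * ((1:ℝ) ^ 3)⁻¹ = (1:ℝ) * (2)
    norm_num
  · show 6 * (1:ℝ) = (1:ℝ) * (6)
    norm_num
  · show 20 * (1:ℝ) ^ 3 = (1:ℝ) * (20)
    norm_num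
  · show 42 * (1:ℝ) ^ 5 = (1:ℝ) * (42)
    norm_num

lemma det_Mh (γ : ℝ) (h0 : γ ≠ 0) : (Mh γ).det = 256 * pD γ / γ^12 := by
  rw [Mh_factor γ h0, Matrix.det_mul, Matrix.det_diagonal, det_Ms]
  simp only [Fin.prod_univ_six, vec6_0, vec6_1, vec6_2, vec6_3, vec6_4, vec6_5]
  field_simp

lemma pD_lb (γ : ℝ) (h0 : 0 < γ) (h5 : γ < 1/5) : 1/2 ≤ pD γ := by
  have hle : γ ≤ 1/5 := le_of_lt h5
  have h4 : γ^4 ≤ (1/5:ℝ)^4 := pow_le_pow_left₀ h0.le hle 4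
  have h8 : γ^8 ≤ (1/5:ℝ)^8 := pow_le_pow_left₀ h0.le hle 8
  have h14 : γ^14 ≤ (1/5:ℝ)^14 := pow_le_pow_left₀ h0.le hle 14
  have h18 : γ^18 ≤ (1/5:ℝ)^18 := pow_le_pow_left₀ h0.le hle 18
  have h24 : γ^24 ≤ (1/5:ℝ)^24 := pow_le_pow_left₀ h0.le hle 24
  have p6 : (0:ℝ) ≤ γ^6 := pow_nonneg h0.le 6
  have p10 : (0:ℝ) ≤ γ^10 := pow_nonneg h0.le 10
  have p16 : (0:ℝ) ≤ γ^16 := pow_nonneg h0.le 16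
  have p20 : (0:ℝ) ≤ γ^20 := pow_nonneg h0.le 20
  norm_num at h4 h8 h14 h18 h24
  unfold pD
  linarith
def qa0 (x : ℝ) : ℝ := ((3)*x^8 + (-8)*x^10 + (5)*x^12 + (5)*x^16 + (-8)*x^18 + (3)*x^20)
def qa1 (x : ℝ) : ℝ := ((-8)*x^6 + (20)*x^8 + (-12)*x^10 + (-12)*x^16 + (20)*x^18 + (-8)*x^20)
def qa2 (x : ℝ) : ℝ := (((1)/6) + ((40)/3)*x^6 + (-45)*x^8 + (48)*x^10 + ((-50)/3)*x^12 + ((15)/2)*x^16 + ((-40)/3)*x^18 + (6)*x^20)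
def qa3 (x : ℝ) : ℝ := ((-1) + (25)*x^8 + (-48)*x^10 + (25)*x^12 + (-1)*x^20)
def qa4 (x : ℝ) : ℝ := (((4)/3) + ((-40)/3)*x^6 + (12)*x^8 + (12)*x^10 + ((-40)/3)*x^12 + ((4)/3)*x^18)
def qa5 (x : ℝ) : ℝ := (((-1)/2) + (8)*x^6 + (-15)*x^8 + (8)*x^10 + ((-1)/2)*x^16)
def qb0 (x : ℝ) : ℝ := (((-1)/2)*x^8 + (8)*x^14 + (-15)*x^16 + (8)*x^18 + ((-1)/2)*x^24)
def qb1 (x : ℝ) : ℝ := (((4)/3)*x^6 + ((-40)/3)*x^12 + (12)*x^14 + (12)*x^16 + ((-40)/3)*x^18 + ((4)/3)*x^24)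
def qb2 (x : ℝ) : ℝ := ((-1)*x^4 + (25)*x^12 + (-48)*x^14 + (25)*x^16 + (-1)*x^24)
def qb3 (x : ℝ) : ℝ := (((1)/6) + ((40)/3)*x^6 + (-45)*x^8 + (48)*x^10 + ((-50)/3)*x^12 + ((15)/2)*x^16 + ((-40)/3)*x^18 + (6)*x^20)
def qb4 (x : ℝ) : ℝ := ((-8)*x^4 + (20)*x^6 + (-12)*x^8 + (-12)*x^14 + (20)*x^16 + (-8)*x^18)
def qb5 (x : ℝ) : ℝ := ((3)*x^4 + (-8)*x^6 + (5)*x^8 + (5)*x^12 + (-8)*x^14 + (3)*x^16)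
def alv (x : ℝ) : Fin 6 → ℝ := ![qa0 x/pD x, qa1 x/pD x, qa2 x/pD x, qa3 x/pD x, qa4 x/pD x, qa5 x/pD x]
def bev (x : ℝ) : Fin 6 → ℝ := ![qb0 x/pD x, qb1 x/pD x, qb2 x/pD x, qb3 x/pD x, qb4 x/pD x, qb5 x/pD x]

set_option maxHeartbeats 1000000 in
lemma diff0a (γ : ℝ) (h0 : 0 < γ) (h5 : γ < 1/5) :
    |alv γ 0 - ((3)*γ^8)| ≤ 160000 * γ^10 := by
  have hg1 : γ ≤ 1 := by linarith
  have hp2 := pD_lb γ h0 h5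
  have hpPos : (0:ℝ) < pD γ := by linarith
  have hp : pD γ ≠ 0 := ne_of_gt hpPos
  have hnum : qa0 γ - ((3)*γ^8) * pD γ = γ^10 * ((-8) + (113)*γ^2 + (-480)*γ^4 + (950)*γ^6 + (-872)*γ^8 + (3)*γ^10 + (864)*γ^12 + (-945)*γ^14 + (480)*γ^16 + (-108)*γ^18 + (3)*γ^22) := by
    simp only [qa0, pD]; ring
  have heq : alv γ 0 - ((3)*γ^8) = γ^10 * ((-8) + (113)*γ^2 + (-480)*γ^4 + (950)*γ^6 + (-872)*γ^8 + (3)*γ^10 + (864)*γ^12 + (-945)*γ^14 + (480)*γ^16 + (-108)*γ^18 + (3)*γ^22) / pD γ := by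
    show qa0 γ / pD γ - ((3)*γ^8) = _
    rw [← hnum]
    field_simp
    try ring
  rw [heq, abs_div, abs_mul, abs_pow, abs_of_pos h0, abs_of_pos hpPos]
  have hb : |((-8) + (113)*γ^2 + (-480)*γ^4 + (950)*γ^6 + (-872)*γ^8 + (3)*γ^10 + (864)*γ^12 + (-945)*γ^14 + (480)*γ^16 + (-108)*γ^18 + (3)*γ^22)| ≤ 4827 := by
    rw [abs_le]; constructor <;> linarith [(pow_le_one₀ h0.le hg1 : γ^0 ≤ 1), (pow_le_one₀ h0.le hg1 : γ^2 ≤ 1), (pow_le_one₀ h0.le hg1 : γ^4 ≤ 1), (pow_le_one₀ h0.le hg1 : γ^6 ≤ 1), (pow_le_one₀ h0.le hg1 : γ^8 ≤ 1), (pow_le_one₀ h0.le hg1 : γ^10 ≤ 1), (pow_le_one₀ h0.le hg1 : γ^12 ≤ 1), (pow_le_one₀ h0.le hg1 : γ^14 ≤ 1), (pow_le_one₀ h0.le hg1 : γ^16 ≤ 1), (pow_le_one₀ h0.le hg1 : γ^18 ≤ 1), (pow_le_one₀ h0.le hg1 : γ^22 ≤ 1), pow_nonneg h0.le 0, pow_nonneg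 h0.le 2, pow_nonneg h0.le 4, pow_nonneg h0.le 6, pow_nonneg h0.le 8, pow_nonneg h0.le 10, pow_nonneg h0.le 12, pow_nonneg h0.le 14, pow_nonneg h0.le 16, pow_nonneg h0.le 18, pow_nonneg h0.le 22]
  have h1 := mul_le_mul_of_nonneg_left hb (pow_nonneg h0.le 10)
  have h2 := mul_le_mul_of_nonneg_left hp2 (pow_nonneg h0.le 10)
  rw [div_le_iff₀ hpPos]
  nlinarith [pow_nonneg h0.le 10]

set_option maxHeartbeats 1000000 in
lemma diff0b (γ : ℝ) (h0 : 0 < γ) (h5 : γ < 1/5) :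
    |bev γ 0 - (((-1)/2)*γ^8)| ≤ 160000 * γ^10 := by
  have hg1 : γ ≤ 1 := by linarith
  have hp2 := pD_lb γ h0 h5
  have hpPos : (0:ℝ) < pD γ := by linarith
  have hp : pD γ ≠ 0 := ne_of_gt hpPos
  have hnum : qb0 γ - (((-1)/2)*γ^8) * pD γ = γ^10 * ((-18)*γ^2 + (88)*γ^4 + ((-345)/2)*γ^6 + (152)*γ^8 + (-144)*γ^12 + (157)*γ^14 + (-80)*γ^16 + (18)*γ^18 + ((-1)/2)*γ^22) := by
    simp only [qb0, pD]; ring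
  have heq : bev γ 0 - (((-1)/2)*γ^8) = γ^10 * ((-18)*γ^2 + (88)*γ^4 + ((-345)/2)*γ^6 + (152)*γ^8 + (-144)*γ^12 + (157)*γ^14 + (-80)*γ^16 + (18)*γ^18 + ((-1)/2)*γ^22) / pD γ := by
    show qb0 γ / pD γ - (((-1)/2)*γ^8) = _
    rw [← hnum]
    field_simp
    try ring
  rw [heq, abs_div, abs_mul, abs_pow, abs_of_pos h0, abs_of_pos hpPos]
  have hb : |((-18)*γ^2 + (88)*γ^4 + ((-345)/2)*γ^6 + (152)*γ^8 + (-144)*γ^12 + (157)*γ^14 + (-80)*γ^16 + (18)*γ^18 + ((-1)/2)*γ^22)| ≤ 831 := by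
    rw [abs_le]; constructor <;> linarith [(pow_le_one₀ h0.le hg1 : γ^2 ≤ 1), (pow_le_one₀ h0.le hg1 : γ^4 ≤ 1), (pow_le_one₀ h0.le hg1 : γ^6 ≤ 1), (pow_le_one₀ h0.le hg1 : γ^8 ≤ 1), (pow_le_one₀ h0.le hg1 : γ^12 ≤ 1), (pow_le_one₀ h0.le hg1 : γ^14 ≤ 1), (pow_le_one₀ h0.le hg1 : γ^16 ≤ 1), (pow_le_one₀ h0.le hg1 : γ^18 ≤ 1), (pow_le_one₀ h0.le hg1 : γ^22 ≤ 1), pow_nonneg h0.le 2, pow_nonneg h0.le 4, pow_nonneg h0.le 6, pow_nonneg h0.le 8, pow_nonneg h0.le 12, pow_nonneg h0.le 14, pow_nonneg h0.le 16, pow_nonneg h0.le 18, pow_nonneg h0.le 22]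
  have h1 := mul_le_mul_of_nonneg_left hb (pow_nonneg h0.le 10)
  have h2 := mul_le_mul_of_nonneg_left hp2 (pow_nonneg h0.le 10)
  rw [div_le_iff₀ hpPos]
  nlinarith [pow_nonneg h0.le 10]

set_option maxHeartbeats 1000000 in
lemma diff1a (γ : ℝ) (h0 : 0 < γ) (h5 : γ < 1/5) :
    |alv γ 1 - ((-8)*γ^6)| ≤ 160000 * γ^8 := by
  have hg1 : γ ≤ 1 := by linarith
  have hp2 := pD_lb γ h0 h5
  have hpPos : (0:ℝ) < pD γ := by linarith
  have hp : pD γ ≠ 0 := ne_of_gt hpPos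
  have hnum : qa1 γ - ((-8)*γ^6) * pD γ = γ^8 * ((20) + (-300)*γ^2 + (1280)*γ^4 + (-2520)*γ^6 + (2292)*γ^8 + (20)*γ^10 + (-2312)*γ^12 + (2520)*γ^14 + (-1280)*γ^16 + (288)*γ^18 + (-8)*γ^22) := by
    simp only [qa1, pD]; ring
  have heq : alv γ 1 - ((-8)*γ^6) = γ^8 * ((20) + (-300)*γ^2 + (1280)*γ^4 + (-2520)*γ^6 + (2292)*γ^8 + (20)*γ^10 + (-2312)*γ^12 + (2520)*γ^14 + (-1280)*γ^16 + (288)*γ^18 + (-8)*γ^22) / pD γ := by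
    show qa1 γ / pD γ - ((-8)*γ^6) = _
    rw [← hnum]
    field_simp
    try ring
  rw [heq, abs_div, abs_mul, abs_pow, abs_of_pos h0, abs_of_pos hpPos]
  have hb : |((20) + (-300)*γ^2 + (1280)*γ^4 + (-2520)*γ^6 + (2292)*γ^8 + (20)*γ^10 + (-2312)*γ^12 + (2520)*γ^14 + (-1280)*γ^16 + (288)*γ^18 + (-8)*γ^22)| ≤ 12841 := by
    rw [abs_le]; constructor <;> linarith [(pow_le_one₀ h0.le hg1 : γ^0 ≤ 1), (pow_le_one₀ h0.le hg1 : γ^2 ≤ 1), (pow_le_one₀ h0.le hg1 : γ^4 ≤ 1), (pow_le_one₀ h0.le hg1 : γ^6 ≤ 1), (pow_le_one₀ h0.le hg1 : γ^8 ≤ 1), (pow_le_one₀ h0.le hg1 : γ^10 ≤ 1), (pow_le_one₀ h0.le hg1 : γ^12 ≤ 1), (pow_le_one₀ h0.le hg1 : γ^14 ≤ 1), (pow_le_one₀ h0.le hg1 : γ^16 ≤ 1), (pow_le_one₀ h0.le hg1 : γ^18 ≤ 1), (pow_le_one₀ h0.le hg1 : γ^22 ≤ 1), pow_nonneg h0.le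 0, pow_nonneg h0.le 2, pow_nonneg h0.le 4, pow_nonneg h0.le 6, pow_nonneg h0.le 8, pow_nonneg h0.le 10, pow_nonneg h0.le 12, pow_nonneg h0.le 14, pow_nonneg h0.le 16, pow_nonneg h0.le 18, pow_nonneg h0.le 22]
  have h1 := mul_le_mul_of_nonneg_left hb (pow_nonneg h0.le 8)
  have h2 := mul_le_mul_of_nonneg_left hp2 (pow_nonneg h0.le 8)
  rw [div_le_iff₀ hpPos]
  nlinarith [pow_nonneg h0.le 8]

set_option maxHeartbeats 1000000 in
lemma diff1b (γ : ℝ) (h0 : 0 < γ) (h5 : γ < 1/5) :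
    |bev γ 1 - (((4)/3)*γ^6)| ≤ 160000 * γ^8 := by
  have hg1 : γ ≤ 1 := by linarith
  have hp2 := pD_lb γ h0 h5
  have hpPos : (0:ℝ) < pD γ := by linarith
  have hp : pD γ ≠ 0 := ne_of_gt hpPos
  have hnum : qb1 γ - (((4)/3)*γ^6) * pD γ = γ^8 * ((48)*γ^2 + ((-680)/3)*γ^4 + (432)*γ^6 + (-372)*γ^8 + ((-40)/3)*γ^10 + (384)*γ^12 + (-420)*γ^14 + ((644)/3)*γ^16 + (-48)*γ^18 + ((4)/3)*γ^22) := by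
    simp only [qb1, pD]; ring
  have heq : bev γ 1 - (((4)/3)*γ^6) = γ^8 * ((48)*γ^2 + ((-680)/3)*γ^4 + (432)*γ^6 + (-372)*γ^8 + ((-40)/3)*γ^10 + (384)*γ^12 + (-420)*γ^14 + ((644)/3)*γ^16 + (-48)*γ^18 + ((4)/3)*γ^22) / pD γ := by
    show qb1 γ / pD γ - (((4)/3)*γ^6) = _
    rw [← hnum]
    field_simp
    try ring
  rw [heq, abs_div, abs_mul, abs_pow, abs_of_pos h0, abs_of_pos hpPos]
  have hb : |((48)*γ^2 + ((-680)/3)*γ^4 + (432)*γ^6 + (-372)*γ^8 + ((-40)/3)*γ^10 + (384)*γ^12 + (-420)*γ^14 + ((644)/3)*γ^16 + (-48)*γ^18 + ((4)/3)*γ^22)| ≤ 2161 := by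
    rw [abs_le]; constructor <;> linarith [(pow_le_one₀ h0.le hg1 : γ^2 ≤ 1), (pow_le_one₀ h0.le hg1 : γ^4 ≤ 1), (pow_le_one₀ h0.le hg1 : γ^6 ≤ 1), (pow_le_one₀ h0.le hg1 : γ^8 ≤ 1), (pow_le_one₀ h0.le hg1 : γ^10 ≤ 1), (pow_le_one₀ h0.le hg1 : γ^12 ≤ 1), (pow_le_one₀ h0.le hg1 : γ^14 ≤ 1), (pow_le_one₀ h0.le hg1 : γ^16 ≤ 1), (pow_le_one₀ h0.le hg1 : γ^18 ≤ 1), (pow_le_one₀ h0.le hg1 : γ^22 ≤ 1), pow_nonneg h0.le 2, pow_nonneg h0.le 4, pow_nonneg h0.le 6, pow_nonneg h0.le 8, pow_nonneg h0.le 10, pow_nonneg h0.le 12, pow_nonneg h0.le 14, pow_nonneg h0.le 16, pow_nonneg h0.le 18, pow_nonneg h0.le 22]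
  have h1 := mul_le_mul_of_nonneg_left hb (pow_nonneg h0.le 8)
  have h2 := mul_le_mul_of_nonneg_left hp2 (pow_nonneg h0.le 8)
  rw [div_le_iff₀ hpPos]
  nlinarith [pow_nonneg h0.le 8]

set_option maxHeartbeats 1000000 in
lemma diff2a (γ : ℝ) (h0 : 0 < γ) (h5 : γ < 1/5) :
    |alv γ 2 - (((1)/6) + (6)*γ^4)| ≤ 160000 * γ^6 := by
  have hg1 : γ ≤ 1 := by linarith
  have hp2 := pD_lb γ h0 h5
  have hpPos : (0:ℝ) < pD γ := by linarith
  have hp : pD γ ≠ 0 := ne_of_gt hpPos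
  have hnum : qa2 γ - (((1)/6) + (6)*γ^4) * pD γ = γ^6 * (((-40)/3) + ((447)/2)*γ^2 + (-960)*γ^4 + ((5620)/3)*γ^6 + (-1680)*γ^8 + (-45)*γ^10 + ((5224)/3)*γ^12 + (-1890)*γ^14 + (960)*γ^16 + ((-1295)/6)*γ^18 + (6)*γ^22) := by
    simp only [qa2, pD]; ring
  have heq : alv γ 2 - (((1)/6) + (6)*γ^4) = γ^6 * (((-40)/3) + ((447)/2)*γ^2 + (-960)*γ^4 + ((5620)/3)*γ^6 + (-1680)*γ^8 + (-45)*γ^10 + ((5224)/3)*γ^12 + (-1890)*γ^14 + (960)*γ^16 + ((-1295)/6)*γ^18 + (6)*γ^22) / pD γ := by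
    show qa2 γ / pD γ - (((1)/6) + (6)*γ^4) = _
    rw [← hnum]
    field_simp
    try ring
  rw [heq, abs_div, abs_mul, abs_pow, abs_of_pos h0, abs_of_pos hpPos]
  have hb : |(((-40)/3) + ((447)/2)*γ^2 + (-960)*γ^4 + ((5620)/3)*γ^6 + (-1680)*γ^8 + (-45)*γ^10 + ((5224)/3)*γ^12 + (-1890)*γ^14 + (960)*γ^16 + ((-1295)/6)*γ^18 + (6)*γ^22)| ≤ 9609 := by
    rw [abs_le]; constructor <;> linarith [(pow_le_one₀ h0.le hg1 : γ^0 ≤ 1), (pow_le_one₀ h0.le hg1 : γ^2 ≤ 1), (pow_le_one₀ h0.le hg1 : γ^4 ≤ 1), (pow_le_one₀ h0.le hg1 : γ^6 ≤ 1), (pow_le_one₀ h0.le hg1 : γ^8 ≤ 1), (pow_le_one₀ h0.le hg1 : γ^10 ≤ 1), (pow_le_one₀ h0.le hg1 : γ^12 ≤ 1), (pow_le_one₀ h0.le hg1 : γ^14 ≤ 1), (pow_le_one₀ h0.le hg1 : γ^16 ≤ 1), (pow_le_one₀ h0.le hg1 : γ^18 ≤ 1), (pow_le_one₀ h0.le hg1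 : γ^22 ≤ 1), pow_nonneg h0.le 0, pow_nonneg h0.le 2, pow_nonneg h0.le 4, pow_nonneg h0.le 6, pow_nonneg h0.le 8, pow_nonneg h0.le 10, pow_nonneg h0.le 12, pow_nonneg h0.le 14, pow_nonneg h0.le 16, pow_nonneg h0.le 18, pow_nonneg h0.le 22]
  have h1 := mul_le_mul_of_nonneg_left hb (pow_nonneg h0.le 6)
  have h2 := mul_le_mul_of_nonneg_left hp2 (pow_nonneg h0.le 6)
  rw [div_le_iff₀ hpPos]
  nlinarith [pow_nonneg h0.le 6]

set_option maxHeartbeats 1000000 in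
lemma diff2b (γ : ℝ) (h0 : 0 < γ) (h5 : γ < 1/5) :
    |bev γ 2 - ((-1)*γ^4)| ≤ 160000 * γ^6 := by
  have hg1 : γ ≤ 1 := by linarith
  have hp2 := pD_lb γ h0 h5
  have hpPos : (0:ℝ) < pD γ := by linarith
  have hp : pD γ ≠ 0 := ne_of_gt hpPos
  have hnum : qb2 γ - ((-1)*γ^4) * pD γ = γ^6 * ((-36)*γ^2 + (160)*γ^4 + (-290)*γ^6 + (240)*γ^8 + (25)*γ^10 + (-288)*γ^12 + (315)*γ^14 + (-160)*γ^16 + (35)*γ^18 + (-1)*γ^22) := by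
    simp only [qb2, pD]; ring
  have heq : bev γ 2 - ((-1)*γ^4) = γ^6 * ((-36)*γ^2 + (160)*γ^4 + (-290)*γ^6 + (240)*γ^8 + (25)*γ^10 + (-288)*γ^12 + (315)*γ^14 + (-160)*γ^16 + (35)*γ^18 + (-1)*γ^22) / pD γ := by
    show qb2 γ / pD γ - ((-1)*γ^4) = _
    rw [← hnum]
    field_simp
    try ring
  rw [heq, abs_div, abs_mul, abs_pow, abs_of_pos h0, abs_of_pos hpPos]
  have hb : |((-36)*γ^2 + (160)*γ^4 + (-290)*γ^6 + (240)*γ^8 + (25)*γ^10 + (-288)*γ^12 + (315)*γ^14 + (-160)*γ^16 + (35)*γ^18 + (-1)*γ^22)| ≤ 1551 := by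
    rw [abs_le]; constructor <;> linarith [(pow_le_one₀ h0.le hg1 : γ^2 ≤ 1), (pow_le_one₀ h0.le hg1 : γ^4 ≤ 1), (pow_le_one₀ h0.le hg1 : γ^6 ≤ 1), (pow_le_one₀ h0.le hg1 : γ^8 ≤ 1), (pow_le_one₀ h0.le hg1 : γ^10 ≤ 1), (pow_le_one₀ h0.le hg1 : γ^12 ≤ 1), (pow_le_one₀ h0.le hg1 : γ^14 ≤ 1), (pow_le_one₀ h0.le hg1 : γ^16 ≤ 1), (pow_le_one₀ h0.le hg1 : γ^18 ≤ 1), (pow_le_one₀ h0.le hg1 : γ^22 ≤ 1), pow_nonneg h0.le 2, pow_nonneg h0.le 4, pow_nonneg h0.le 6, pow_nonneg h0.le 8, pow_nonneg h0.le 10, pow_nonneg h0.le 12, pow_nonneg h0.le 14, pow_nonneg h0.le 16, pow_nonneg h0.le 18, pow_nonneg h0.le 22]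
  have h1 := mul_le_mul_of_nonneg_left hb (pow_nonneg h0.le 6)
  have h2 := mul_le_mul_of_nonneg_left hp2 (pow_nonneg h0.le 6)
  rw [div_le_iff₀ hpPos]
  nlinarith [pow_nonneg h0.le 6]

set_option maxHeartbeats 1000000 in
lemma diff3a (γ : ℝ) (h0 : 0 < γ) (h5 : γ < 1/5) :
    |alv γ 3 - ((-1) + (-36)*γ^4)| ≤ 160000 * γ^6 := by
  have hg1 : γ ≤ 1 := by linarith
  have hp2 := pD_lb γ h0 h5
  have hpPos : (0:ℝ) < pD γ := by linarith
  have hp : pD γ ≠ 0 := ne_of_gt hpPos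
  have hnum : qa3 γ - ((-1) + (-36)*γ^4) * pD γ = γ^6 * ((160) + (-1586)*γ^2 + (6000)*γ^4 + (-11315)*γ^6 + (10080)*γ^8 + (315)*γ^10 + (-10528)*γ^12 + (11375)*γ^14 + (-5760)*γ^16 + (1295)*γ^18 + (-36)*γ^22) := by
    simp only [qa3, pD]; ring
  have heq : alv γ 3 - ((-1) + (-36)*γ^4) = γ^6 * ((160) + (-1586)*γ^2 + (6000)*γ^4 + (-11315)*γ^6 + (10080)*γ^8 + (315)*γ^10 + (-10528)*γ^12 + (11375)*γ^14 + (-5760)*γ^16 + (1295)*γ^18 + (-36)*γ^22) / pD γ := by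
    show qa3 γ / pD γ - ((-1) + (-36)*γ^4) = _
    rw [← hnum]
    field_simp
    try ring
  rw [heq, abs_div, abs_mul, abs_pow, abs_of_pos h0, abs_of_pos hpPos]
  have hb : |((160) + (-1586)*γ^2 + (6000)*γ^4 + (-11315)*γ^6 + (10080)*γ^8 + (315)*γ^10 + (-10528)*γ^12 + (11375)*γ^14 + (-5760)*γ^16 + (1295)*γ^18 + (-36)*γ^22)| ≤ 58451 := by
    rw [abs_le]; constructor <;> linarith [(pow_le_one₀ h0.le hg1 : γ^0 ≤ 1), (pow_le_one₀ h0.le hg1 : γ^2 ≤ 1), (pow_le_one₀ h0.le hg1 : γ^4 ≤ 1), (pow_le_one₀ h0.le hg1 : γ^6 ≤ 1), (pow_le_one₀ h0.le hg1 : γ^8 ≤ 1), (pow_le_one₀ h0.le hg1 : γ^10 ≤ 1), (pow_le_one₀ h0.le hg1 : γ^12 ≤ 1), (pow_le_one₀ h0.le hg1 : γ^14 ≤ 1), (pow_le_one₀ h0.le hg1 : γ^16 ≤ 1), (pow_le_one₀ h0.le hg1 : γ^18 ≤ 1), (pow_le_one₀ h0.le hg1 : γ^22 ≤ 1), pow_nonneg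 h0.le 0, pow_nonneg h0.le 2, pow_nonneg h0.le 4, pow_nonneg h0.le 6, pow_nonneg h0.le 8, pow_nonneg h0.le 10, pow_nonneg h0.le 12, pow_nonneg h0.le 14, pow_nonneg h0.le 16, pow_nonneg h0.le 18, pow_nonneg h0.le 22]
  have h1 := mul_le_mul_of_nonneg_left hb (pow_nonneg h0.le 6)
  have h2 := mul_le_mul_of_nonneg_left hp2 (pow_nonneg h0.le 6)
  rw [div_le_iff₀ hpPos]
  nlinarith [pow_nonneg h0.le 6]

set_option maxHeartbeats 1000000 in
lemma diff3b (γ : ℝ) (h0 : 0 < γ) (h5 : γ < 1/5) :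
    |bev γ 3 - (((1)/6) + (6)*γ^4)| ≤ 160000 * γ^6 := by
  have hg1 : γ ≤ 1 := by linarith
  have hp2 := pD_lb γ h0 h5
  have hpPos : (0:ℝ) < pD γ := by linarith
  have hp : pD γ ≠ 0 := ne_of_gt hpPos
  have hnum : qb3 γ - (((1)/6) + (6)*γ^4) * pD γ = γ^6 * (((-40)/3) + ((447)/2)*γ^2 + (-960)*γ^4 + ((5620)/3)*γ^6 + (-1680)*γ^8 + (-45)*γ^10 + ((5224)/3)*γ^12 + (-1890)*γ^14 + (960)*γ^16 + ((-1295)/6)*γ^18 + (6)*γ^22) := by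
    simp only [qb3, pD]; ring
  have heq : bev γ 3 - (((1)/6) + (6)*γ^4) = γ^6 * (((-40)/3) + ((447)/2)*γ^2 + (-960)*γ^4 + ((5620)/3)*γ^6 + (-1680)*γ^8 + (-45)*γ^10 + ((5224)/3)*γ^12 + (-1890)*γ^14 + (960)*γ^16 + ((-1295)/6)*γ^18 + (6)*γ^22) / pD γ := by
    show qb3 γ / pD γ - (((1)/6) + (6)*γ^4) = _
    rw [← hnum]
    field_simp
    try ring
  rw [heq, abs_div, abs_mul, abs_pow, abs_of_pos h0, abs_of_pos hpPos]
  have hb : |(((-40)/3) + ((447)/2)*γ^2 + (-960)*γ^4 + ((5620)/3)*γ^6 + (-1680)*γ^8 + (-45)*γ^10 + ((5224)/3)*γ^12 + (-1890)*γ^14 + (960)*γ^16 + ((-1295)/6)*γ^18 + (6)*γ^22)| ≤ 9609 := by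
    rw [abs_le]; constructor <;> linarith [(pow_le_one₀ h0.le hg1 : γ^0 ≤ 1), (pow_le_one₀ h0.le hg1 : γ^2 ≤ 1), (pow_le_one₀ h0.le hg1 : γ^4 ≤ 1), (pow_le_one₀ h0.le hg1 : γ^6 ≤ 1), (pow_le_one₀ h0.le hg1 : γ^8 ≤ 1), (pow_le_one₀ h0.le hg1 : γ^10 ≤ 1), (pow_le_one₀ h0.le hg1 : γ^12 ≤ 1), (pow_le_one₀ h0.le hg1 : γ^14 ≤ 1), (pow_le_one₀ h0.le hg1 : γ^16 ≤ 1), (pow_le_one₀ h0.le hg1 : γ^18 ≤ 1), (pow_le_one₀ h0.le hg1 : γ^22 ≤ 1), pow_nonneg h0.le 0, pow_nonneg h0.le 2, pow_nonneg h0.le 4, pow_nonneg h0.le 6, pow_nonneg h0.le 8, pow_nonneg h0.le 10, pow_nonneg h0.le 12, pow_nonneg h0.le 14, pow_nonneg h0.le 16, pow_nonneg h0.le 18, pow_nonneg h0.le 22]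
  have h1 := mul_le_mul_of_nonneg_left hb (pow_nonneg h0.le 6)
  have h2 := mul_le_mul_of_nonneg_left hp2 (pow_nonneg h0.le 6)
  rw [div_le_iff₀ hpPos]
  nlinarith [pow_nonneg h0.le 6]

set_option maxHeartbeats 1000000 in
lemma diff4a (γ : ℝ) (h0 : 0 < γ) (h5 : γ < 1/5) :
    |alv γ 4 - (((4)/3) + (48)*γ^4)| ≤ 160000 * γ^6 := by
  have hg1 : γ ≤ 1 := by linarith
  have hp2 := pD_lb γ h0 h5
  have hpPos : (0:ℝ) < pD γ := by linarith
  have hp : pD γ ≠ 0 := ne_of_gt hpPos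
  have hnum : qa4 γ - (((4)/3) + (48)*γ^4) * pD γ = γ^6 * (((-680)/3) + (2160)*γ^2 + (-8052)*γ^4 + ((45320)/3)*γ^6 + (-13440)*γ^8 + (-420)*γ^10 + ((42116)/3)*γ^12 + (-15168)*γ^14 + (7680)*γ^16 + ((-5180)/3)*γ^18 + (48)*γ^22) := by
    simp only [qa4, pD]; ring
  have heq : alv γ 4 - (((4)/3) + (48)*γ^4) = γ^6 * (((-680)/3) + (2160)*γ^2 + (-8052)*γ^4 + ((45320)/3)*γ^6 + (-13440)*γ^8 + (-420)*γ^10 + ((42116)/3)*γ^12 + (-15168)*γ^14 + (7680)*γ^16 + ((-5180)/3)*γ^18 + (48)*γ^22) / pD γ := by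
    show qa4 γ / pD γ - (((4)/3) + (48)*γ^4) = _
    rw [← hnum]
    field_simp
    try ring
  rw [heq, abs_div, abs_mul, abs_pow, abs_of_pos h0, abs_of_pos hpPos]
  have hb : |(((-680)/3) + (2160)*γ^2 + (-8052)*γ^4 + ((45320)/3)*γ^6 + (-13440)*γ^8 + (-420)*γ^10 + ((42116)/3)*γ^12 + (-15168)*γ^14 + (7680)*γ^16 + ((-5180)/3)*γ^18 + (48)*γ^22)| ≤ 78067 := by
    rw [abs_le]; constructor <;> linarith [(pow_le_one₀ h0.le hg1 : γ^0 ≤ 1), (pow_le_one₀ h0.le hg1 : γ^2 ≤ 1), (pow_le_one₀ h0.le hg1 : γ^4 ≤ 1), (pow_le_one₀ h0.le hg1 : γ^6 ≤ 1), (pow_le_one₀ h0.le hg1 : γ^8 ≤ 1), (pow_le_one₀ h0.le hg1 : γ^10 ≤ 1), (pow_le_one₀ h0.le hg1 : γ^12 ≤ 1), (pow_le_one₀ h0.le hg1 : γ^14 ≤ 1), (pow_le_one₀ h0.le hg1 : γ^16 ≤ 1), (pow_le_one₀ h0.le hg1 : γ^18 ≤ 1), (pow_le_one₀ h0.le hg1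 : γ^22 ≤ 1), pow_nonneg h0.le 0, pow_nonneg h0.le 2, pow_nonneg h0.le 4, pow_nonneg h0.le 6, pow_nonneg h0.le 8, pow_nonneg h0.le 10, pow_nonneg h0.le 12, pow_nonneg h0.le 14, pow_nonneg h0.le 16, pow_nonneg h0.le 18, pow_nonneg h0.le 22]
  have h1 := mul_le_mul_of_nonneg_left hb (pow_nonneg h0.le 6)
  have h2 := mul_le_mul_of_nonneg_left hp2 (pow_nonneg h0.le 6)
  rw [div_le_iff₀ hpPos]
  nlinarith [pow_nonneg h0.le 6]

set_option maxHeartbeats 1000000 in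
lemma diff4b (γ : ℝ) (h0 : 0 < γ) (h5 : γ < 1/5) :
    |bev γ 4 - ((-8)*γ^4)| ≤ 160000 * γ^6 := by
  have hg1 : γ ≤ 1 := by linarith
  have hp2 := pD_lb γ h0 h5
  have hpPos : (0:ℝ) < pD γ := by linarith
  have hp : pD γ ≠ 0 := ne_of_gt hpPos
  have hnum : qb4 γ - ((-8)*γ^4) * pD γ = γ^6 * ((20) + (-300)*γ^2 + (1280)*γ^4 + (-2520)*γ^6 + (2292)*γ^8 + (20)*γ^10 + (-2312)*γ^12 + (2520)*γ^14 + (-1280)*γ^16 + (288)*γ^18 + (-8)*γ^22) := by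
    simp only [qb4, pD]; ring
  have heq : bev γ 4 - ((-8)*γ^4) = γ^6 * ((20) + (-300)*γ^2 + (1280)*γ^4 + (-2520)*γ^6 + (2292)*γ^8 + (20)*γ^10 + (-2312)*γ^12 + (2520)*γ^14 + (-1280)*γ^16 + (288)*γ^18 + (-8)*γ^22) / pD γ := by
    show qb4 γ / pD γ - ((-8)*γ^4) = _
    rw [← hnum]
    field_simp
    try ring
  rw [heq, abs_div, abs_mul, abs_pow, abs_of_pos h0, abs_of_pos hpPos]
  have hb : |((20) + (-300)*γ^2 + (1280)*γ^4 + (-2520)*γ^6 + (2292)*γ^8 + (20)*γ^10 + (-2312)*γ^12 + (2520)*γ^14 + (-1280)*γ^16 + (288)*γ^18 + (-8)*γ^22)| ≤ 12841 := by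
    rw [abs_le]; constructor <;> linarith [(pow_le_one₀ h0.le hg1 : γ^0 ≤ 1), (pow_le_one₀ h0.le hg1 : γ^2 ≤ 1), (pow_le_one₀ h0.le hg1 : γ^4 ≤ 1), (pow_le_one₀ h0.le hg1 : γ^6 ≤ 1), (pow_le_one₀ h0.le hg1 : γ^8 ≤ 1), (pow_le_one₀ h0.le hg1 : γ^10 ≤ 1), (pow_le_one₀ h0.le hg1 : γ^12 ≤ 1), (pow_le_one₀ h0.le hg1 : γ^14 ≤ 1), (pow_le_one₀ h0.le hg1 : γ^16 ≤ 1), (pow_le_one₀ h0.le hg1 : γ^18 ≤ 1), (pow_le_one₀ h0.le hg1 : γ^22 ≤ 1), pow_nonneg h0.le 0, pow_nonneg h0.le 2, pow_nonneg h0.le 4, pow_nonneg h0.le 6, pow_nonneg h0.le 8, pow_nonneg h0.le 10, pow_nonneg h0.le 12, pow_nonneg h0.le 14, pow_nonneg h0.le 16, pow_nonneg h0.le 18, pow_nonneg h0.le 22]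
  have h1 := mul_le_mul_of_nonneg_left hb (pow_nonneg h0.le 6)
  have h2 := mul_le_mul_of_nonneg_left hp2 (pow_nonneg h0.le 6)
  rw [div_le_iff₀ hpPos]
  nlinarith [pow_nonneg h0.le 6]

set_option maxHeartbeats 1000000 in
lemma diff5a (γ : ℝ) (h0 : 0 < γ) (h5 : γ < 1/5) :
    |alv γ 5 - (((-1)/2) + (-18)*γ^4)| ≤ 160000 * γ^6 := by
  have hg1 : γ ≤ 1 := by linarith
  have hp2 := pD_lb γ h0 h5
  have hpPos : (0:ℝ) < pD γ := by linarith
  have hp : pD γ ≠ 0 := ne_of_gt hpPos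
  have hnum : qa5 γ - (((-1)/2) + (-18)*γ^4) * pD γ = γ^6 * ((88) + ((-1641)/2)*γ^2 + (3032)*γ^4 + (-5670)*γ^6 + (5040)*γ^8 + (157)*γ^10 + (-5264)*γ^12 + (5688)*γ^14 + (-2880)*γ^16 + ((1295)/2)*γ^18 + (-18)*γ^22) := by
    simp only [qa5, pD]; ring
  have heq : alv γ 5 - (((-1)/2) + (-18)*γ^4) = γ^6 * ((88) + ((-1641)/2)*γ^2 + (3032)*γ^4 + (-5670)*γ^6 + (5040)*γ^8 + (157)*γ^10 + (-5264)*γ^12 + (5688)*γ^14 + (-2880)*γ^16 + ((1295)/2)*γ^18 + (-18)*γ^22) / pD γ := by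
    show qa5 γ / pD γ - (((-1)/2) + (-18)*γ^4) = _
    rw [← hnum]
    field_simp
    try ring
  rw [heq, abs_div, abs_mul, abs_pow, abs_of_pos h0, abs_of_pos hpPos]
  have hb : |((88) + ((-1641)/2)*γ^2 + (3032)*γ^4 + (-5670)*γ^6 + (5040)*γ^8 + (157)*γ^10 + (-5264)*γ^12 + (5688)*γ^14 + (-2880)*γ^16 + ((1295)/2)*γ^18 + (-18)*γ^22)| ≤ 29306 := by
    rw [abs_le]; constructor <;> linarith [(pow_le_one₀ h0.le hg1 : γ^0 ≤ 1), (pow_le_one₀ h0.le hg1 : γ^2 ≤ 1), (pow_le_one₀ h0.le hg1 : γ^4 ≤ 1), (pow_le_one₀ h0.le hg1 : γ^6 ≤ 1), (pow_le_one₀ h0.le hg1 : γ^8 ≤ 1), (pow_le_one₀ h0.le hg1 : γ^10 ≤ 1), (pow_le_one₀ h0.le hg1 : γ^12 ≤ 1), (pow_le_one₀ h0.le hg1 : γ^14 ≤ 1), (pow_le_one₀ h0.le hg1 : γ^16 ≤ 1), (pow_le_one₀ h0.le hg1 : γ^18 ≤ 1), (pow_le_one₀ h0.le hg1 : γ^22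 ≤ 1), pow_nonneg h0.le 0, pow_nonneg h0.le 2, pow_nonneg h0.le 4, pow_nonneg h0.le 6, pow_nonneg h0.le 8, pow_nonneg h0.le 10, pow_nonneg h0.le 12, pow_nonneg h0.le 14, pow_nonneg h0.le 16, pow_nonneg h0.le 18, pow_nonneg h0.le 22]
  have h1 := mul_le_mul_of_nonneg_left hb (pow_nonneg h0.le 6)
  have h2 := mul_le_mul_of_nonneg_left hp2 (pow_nonneg h0.le 6)
  rw [div_le_iff₀ hpPos]
  nlinarith [pow_nonneg h0.le 6]

set_option maxHeartbeats 1000000 in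
lemma diff5b (γ : ℝ) (h0 : 0 < γ) (h5 : γ < 1/5) :
    |bev γ 5 - ((3)*γ^4)| ≤ 160000 * γ^6 := by
  have hg1 : γ ≤ 1 := by linarith
  have hp2 := pD_lb γ h0 h5
  have hpPos : (0:ℝ) < pD γ := by linarith
  have hp : pD γ ≠ 0 := ne_of_gt hpPos
  have hnum : qb5 γ - ((3)*γ^4) * pD γ = γ^6 * ((-8) + (113)*γ^2 + (-480)*γ^4 + (950)*γ^6 + (-872)*γ^8 + (3)*γ^10 + (864)*γ^12 + (-945)*γ^14 + (480)*γ^16 + (-108)*γ^18 + (3)*γ^22) := by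
    simp only [qb5, pD]; ring
  have heq : bev γ 5 - ((3)*γ^4) = γ^6 * ((-8) + (113)*γ^2 + (-480)*γ^4 + (950)*γ^6 + (-872)*γ^8 + (3)*γ^10 + (864)*γ^12 + (-945)*γ^14 + (480)*γ^16 + (-108)*γ^18 + (3)*γ^22) / pD γ := by
    show qb5 γ / pD γ - ((3)*γ^4) = _
    rw [← hnum]
    field_simp
    try ring
  rw [heq, abs_div, abs_mul, abs_pow, abs_of_pos h0, abs_of_pos hpPos]
  have hb : |((-8) + (113)*γ^2 + (-480)*γ^4 + (950)*γ^6 + (-872)*γ^8 + (3)*γ^10 + (864)*γ^12 + (-945)*γ^14 + (480)*γ^16 + (-108)*γ^18 + (3)*γ^22)| ≤ 4827 := by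
    rw [abs_le]; constructor <;> linarith [(pow_le_one₀ h0.le hg1 : γ^0 ≤ 1), (pow_le_one₀ h0.le hg1 : γ^2 ≤ 1), (pow_le_one₀ h0.le hg1 : γ^4 ≤ 1), (pow_le_one₀ h0.le hg1 : γ^6 ≤ 1), (pow_le_one₀ h0.le hg1 : γ^8 ≤ 1), (pow_le_one₀ h0.le hg1 : γ^10 ≤ 1), (pow_le_one₀ h0.le hg1 : γ^12 ≤ 1), (pow_le_one₀ h0.le hg1 : γ^14 ≤ 1), (pow_le_one₀ h0.le hg1 : γ^16 ≤ 1), (pow_le_one₀ h0.le hg1 : γ^18 ≤ 1), (pow_le_one₀ h0.le hg1 : γ^22 ≤ 1), pow_nonneg h0.le 0, pow_nonneg h0.le 2, pow_nonneg h0.le 4, pow_nonneg h0.le 6, pow_nonneg h0.le 8, pow_nonneg h0.le 10, pow_nonneg h0.le 12, pow_nonneg h0.le 14, pow_nonneg h0.le 16, pow_nonneg h0.le 18, pow_nonneg h0.le 22]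
  have h1 := mul_le_mul_of_nonneg_left hb (pow_nonneg h0.le 6)
  have h2 := mul_le_mul_of_nonneg_left hp2 (pow_nonneg h0.le 6)
  rw [div_le_iff₀ hpPos]
  nlinarith [pow_nonneg h0.le 6]
set_option maxHeartbeats 1000000 in
lemma mulVec_al (γ : ℝ) (h0 : γ ≠ 0) (hp : pD γ ≠ 0) :
    Mh γ *ᵥ alv γ = ![(6*γ)⁻¹, -(6*γ^2)⁻¹, (3*γ^3)⁻¹, 0, 0, 0] := by
  rw [Mh_eq γ h0]
  funext i
  fin_cases i
  · simp only [Matrix.mulVec, dotProduct, Fin.sum_univ_six]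
    show (γ ^ 5)⁻¹ * (qa0 γ / pD γ) + (γ ^ 3)⁻¹ * (qa1 γ / pD γ) + γ⁻¹ * (qa2 γ / pD γ) + γ ^ 3 * (qa3 γ / pD γ) + γ ^ 5 * (qa4 γ / pD γ) + γ ^ 7 * (qa5 γ / pD γ) = (6*γ)⁻¹
    field_simp
    simp only [qa0, qa1, qa2, qa3, qa4, qa5, pD]
    ring
  · simp only [Matrix.mulVec, dotProduct, Fin.sum_univ_six]
    show -5 * (γ ^ 6)⁻¹ * (qa0 γ / pD γ) + -3 * (γ ^ 4)⁻¹ * (qa1 γ / pD γ) + -1 * (γ ^ 2)⁻¹ * (qa2 γ / pD γ) + 3 * γ ^ 2 * (qa3 γ / pD γ) + 5 * γ ^ 4 * (qa4 γ / pD γ) + 7 * γ ^ 6 * (qa5 γ / pD γ) = -(6*γ^2)⁻¹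
    field_simp
    simp only [qa0, qa1, qa2, qa3, qa4, qa5, pD]
    ring
  · simp only [Matrix.mulVec, dotProduct, Fin.sum_univ_six]
    show 30 * (γ ^ 7)⁻¹ * (qa0 γ / pD γ) + 12 * (γ ^ 5)⁻¹ * (qa1 γ / pD γ) + 2 * (γ ^ 3)⁻¹ * (qa2 γ / pD γ) + 6 * γ * (qa3 γ / pD γ) + 20 * γ ^ 3 * (qa4 γ / pD γ) + 42 * γ ^ 5 * (qa5 γ / pD γ) = (3*γ^3)⁻¹
    field_simp
    simp only [qa0, qa1, qa2, qa3, qa4, qa5, pD]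
    ring
  · simp only [Matrix.mulVec, dotProduct, Fin.sum_univ_six]
    show ((1:ℝ) ^ 5)⁻¹ * (qa0 γ / pD γ) + ((1:ℝ) ^ 3)⁻¹ * (qa1 γ / pD γ) + (1:ℝ)⁻¹ * (qa2 γ / pD γ) + (1:ℝ) ^ 3 * (qa3 γ / pD γ) + (1:ℝ) ^ 5 * (qa4 γ / pD γ) + (1:ℝ) ^ 7 * (qa5 γ / pD γ) = 0
    field_simp
    simp only [qa0, qa1, qa2, qa3, qa4, qa5, pD]
    ring
  · simp only [Matrix.mulVec, dotProduct, Fin.sum_univ_six]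
    show -5 * ((1:ℝ) ^ 6)⁻¹ * (qa0 γ / pD γ) + -3 * ((1:ℝ) ^ 4)⁻¹ * (qa1 γ / pD γ) + -1 * ((1:ℝ) ^ 2)⁻¹ * (qa2 γ / pD γ) + 3 * (1:ℝ) ^ 2 * (qa3 γ / pD γ) + 5 * (1:ℝ) ^ 4 * (qa4 γ / pD γ) + 7 * (1:ℝ) ^ 6 * (qa5 γ / pD γ) = 0
    field_simp
    simp only [qa0, qa1, qa2, qa3, qa4, qa5, pD]
    ring
  · simp only [Matrix.mulVec, dotProduct, Fin.sum_univ_six]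
    show 30 * ((1:ℝ) ^ 7)⁻¹ * (qa0 γ / pD γ) + 12 * ((1:ℝ) ^ 5)⁻¹ * (qa1 γ / pD γ) + 2 * ((1:ℝ) ^ 3)⁻¹ * (qa2 γ / pD γ) + 6 * (1:ℝ) * (qa3 γ / pD γ) + 20 * (1:ℝ) ^ 3 * (qa4 γ / pD γ) + 42 * (1:ℝ) ^ 5 * (qa5 γ / pD γ) = 0
    field_simp
    simp only [qa0, qa1, qa2, qa3, qa4, qa5, pD]
    ring

set_option maxHeartbeats 1000000 in
lemma mulVec_be (γ : ℝ) (h0 : γ ≠ 0) (hp : pD γ ≠ 0) :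
    Mh γ *ᵥ bev γ = ![0, 0, 0, (6:ℝ)⁻¹, (2:ℝ)⁻¹, 1] := by
  rw [Mh_eq γ h0]
  funext i
  fin_cases i
  · simp only [Matrix.mulVec, dotProduct, Fin.sum_univ_six]
    show (γ ^ 5)⁻¹ * (qb0 γ / pD γ) + (γ ^ 3)⁻¹ * (qb1 γ / pD γ) + γ⁻¹ * (qb2 γ / pD γ) + γ ^ 3 * (qb3 γ / pD γ) + γ ^ 5 * (qb4 γ / pD γ) + γ ^ 7 * (qb5 γ / pD γ) = 0
    field_simp
    simp only [qb0, qb1, qb2, qb3, qb4, qb5, pD]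
    ring
  · simp only [Matrix.mulVec, dotProduct, Fin.sum_univ_six]
    show -5 * (γ ^ 6)⁻¹ * (qb0 γ / pD γ) + -3 * (γ ^ 4)⁻¹ * (qb1 γ / pD γ) + -1 * (γ ^ 2)⁻¹ * (qb2 γ / pD γ) + 3 * γ ^ 2 * (qb3 γ / pD γ) + 5 * γ ^ 4 * (qb4 γ / pD γ) + 7 * γ ^ 6 * (qb5 γ / pD γ) = 0
    field_simp
    simp only [qb0, qb1, qb2, qb3, qb4, qb5, pD]
    ring
  · simp only [Matrix.mulVec, dotProduct, Fin.sum_univ_six]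
    show 30 * (γ ^ 7)⁻¹ * (qb0 γ / pD γ) + 12 * (γ ^ 5)⁻¹ * (qb1 γ / pD γ) + 2 * (γ ^ 3)⁻¹ * (qb2 γ / pD γ) + 6 * γ * (qb3 γ / pD γ) + 20 * γ ^ 3 * (qb4 γ / pD γ) + 42 * γ ^ 5 * (qb5 γ / pD γ) = 0
    field_simp
    simp only [qb0, qb1, qb2, qb3, qb4, qb5, pD]
    ring
  · simp only [Matrix.mulVec, dotProduct, Fin.sum_univ_six]
    show ((1:ℝ) ^ 5)⁻¹ * (qb0 γ / pD γ) + ((1:ℝ) ^ 3)⁻¹ * (qb1 γ / pD γ) + (1:ℝ)⁻¹ * (qb2 γ / pD γ) + (1:ℝ) ^ 3 * (qb3 γ / pD γ) + (1:ℝ) ^ 5 * (qb4 γ / pD γ) + (1:ℝ) ^ 7 * (qb5 γ / pD γ) = (6:ℝ)⁻¹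
    field_simp
    simp only [qb0, qb1, qb2, qb3, qb4, qb5, pD]
    ring
  · simp only [Matrix.mulVec, dotProduct, Fin.sum_univ_six]
    show -5 * ((1:ℝ) ^ 6)⁻¹ * (qb0 γ / pD γ) + -3 * ((1:ℝ) ^ 4)⁻¹ * (qb1 γ / pD γ) + -1 * ((1:ℝ) ^ 2)⁻¹ * (qb2 γ / pD γ) + 3 * (1:ℝ) ^ 2 * (qb3 γ / pD γ) + 5 * (1:ℝ) ^ 4 * (qb4 γ / pD γ) + 7 * (1:ℝ) ^ 6 * (qb5 γ / pD γ) = (2:ℝ)⁻¹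
    field_simp
    simp only [qb0, qb1, qb2, qb3, qb4, qb5, pD]
    ring
  · simp only [Matrix.mulVec, dotProduct, Fin.sum_univ_six]
    show 30 * ((1:ℝ) ^ 7)⁻¹ * (qb0 γ / pD γ) + 12 * ((1:ℝ) ^ 5)⁻¹ * (qb1 γ / pD γ) + 2 * ((1:ℝ) ^ 3)⁻¹ * (qb2 γ / pD γ) + 6 * (1:ℝ) * (qb3 γ / pD γ) + 20 * (1:ℝ) ^ 3 * (qb4 γ / pD γ) + 42 * (1:ℝ) ^ 5 * (qb5 γ / pD γ) = 1
    field_simp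
    simp only [qb0, qb1, qb2, qb3, qb4, qb5, pD]
    ring


set_option maxHeartbeats 2000000 in
/-- asymptotics, as `γ → 0⁺`, of the solution of the componentwise linear system
`M^h(γ)·(D₁,…,D₆)ᵀ = (a/(6γ), −a/(6γ²), a/(3γ³), b/6, b/2, b)ᵀ`. -/
theorem stmt8 (m : ℕ) (hm : 1 ≤ m) (a b : EuclideanSpace ℝ (Fin m)) :
    ∃ γ₀ > (0 : ℝ), ∃ K > (0 : ℝ), ∀ γ : ℝ, 0 < γ → γ < γ₀ →
      (Mh γ).det ≠ 0 ∧
      ∀ D : Fin 6 → EuclideanSpace ℝ (Fin m),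
        (∀ l : Fin m, Mh γ *ᵥ (fun i => D i l) =
          fun i => (![(6 * γ)⁻¹ • a, -((6 * γ ^ 2)⁻¹ • a), (3 * γ ^ 3)⁻¹ • a,
            (6 : ℝ)⁻¹ • b, (2 : ℝ)⁻¹ • b, b] : Fin 6 → EuclideanSpace ℝ (Fin m)) i l) →
        ‖D 0 - γ ^ 8 • ((3 : ℝ) • a - (2 : ℝ)⁻¹ • b)‖ ≤ K * γ ^ 10 ∧
        ‖D 1 - γ ^ 6 • ((-8 : ℝ) • a + (4 / 3 : ℝ) • b)‖ ≤ K * γ ^ 8 ∧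
        ‖D 2 - ((6⁻¹ * (1 + 36 * γ ^ 4)) • a - γ ^ 4 • b)‖ ≤ K * γ ^ 6 ∧
        ‖D 3 - (1 + 36 * γ ^ 4) • ((-1 : ℝ) • a + (6 : ℝ)⁻¹ • b)‖ ≤ K * γ ^ 6 ∧
        ‖D 4 - ((4 / 3 * (1 + 36 * γ ^ 4)) • a - (8 * γ ^ 4) • b)‖ ≤ K * γ ^ 6 ∧
        ‖D 5 - (-(2⁻¹ * (1 + 36 * γ ^ 4)) • a + (3 * γ ^ 4) • b)‖ ≤ K * γ ^ 6 := by
  refine ⟨1/5, by norm_num, 160000*(‖a‖+‖b‖)+1, by positivity, ?_⟩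
  intro γ hγ0 hγ5
  have h0 : γ ≠ 0 := ne_of_gt hγ0
  have hp2 := pD_lb γ hγ0 hγ5
  have hpPos : (0:ℝ) < pD γ := by linarith
  have hp : pD γ ≠ 0 := ne_of_gt hpPos
  have hdet : (Mh γ).det ≠ 0 := by
    rw [det_Mh γ h0]
    exact div_ne_zero (mul_ne_zero (by norm_num) hp) (pow_ne_zero _ h0)
  refine ⟨hdet, ?_⟩
  intro D hD
  have hinj : Function.Injective ((Mh γ).mulVec) := by
    rw [Matrix.mulVec_injective_iff_isUnit, Matrix.isUnit_iff_isUnit_det]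
    exact isUnit_iff_ne_zero.mpr hdet
  have hsol : ∀ l, (fun i => D i l) = a l • alv γ + b l • bev γ := by
    intro l
    apply hinj
    rw [hD l, Matrix.mulVec_add, Matrix.mulVec_smul, Matrix.mulVec_smul,
      mulVec_al γ h0 hp, mulVec_be γ h0 hp]
    funext i
    fin_cases i
    · show (6 * γ)⁻¹ * a l = a l * (6*γ)⁻¹ + b l * 0
      ring
    · show -((6 * γ ^ 2)⁻¹ * a l) = a l * -(6*γ^2)⁻¹ + b l * 0
      ring
    · show (3 * γ ^ 3)⁻¹ * a l = a l * (3*γ^3)⁻¹ + b l * 0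
      ring
    · show (6 : ℝ)⁻¹ * b l = a l * 0 + b l * (6:ℝ)⁻¹
      ring
    · show (2 : ℝ)⁻¹ * b l = a l * 0 + b l * (2:ℝ)⁻¹
      ring
    · show b l = a l * 0 + b l * 1
      ring
  have hDi : ∀ i, D i = alv γ i • a + bev γ i • b := by
    intro i
    ext l
    have h := congrFun (hsol l) i
    rw [h]
    show a l * alv γ i + b l * bev γ i = alv γ i * a l + bev γ i * b l
    ring
  refine ⟨?_, ?_, ?_, ?_, ?_, ?_⟩
  · have key : D 0 - γ ^ 8 • ((3 : ℝ) • a - (2 : ℝ)⁻¹ • b) = (alv γ 0 - ((3)*γ^8)) • a + (bev γ 0 - (((-1)/2)*γ^8)) • b := by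
      rw [hDi 0]; module
    rw [key]
    refine le_trans (norm_add_le _ _) ?_
    rw [norm_smul, norm_smul, Real.norm_eq_abs, Real.norm_eq_abs]
    have b1 := diff0a γ hγ0 hγ5
    have b2 := diff0b γ hγ0 hγ5
    refine le_trans (add_le_add (mul_le_mul_of_nonneg_right b1 (norm_nonneg a))
      (mul_le_mul_of_nonneg_right b2 (norm_nonneg b))) ?_
    nlinarith [pow_nonneg hγ0.le 10, norm_nonneg a, norm_nonneg b,
      mul_nonneg (pow_nonneg hγ0.le 10) (norm_nonneg a),
      mul_nonneg (pow_nonneg hγ0.le 10) (norm_nonneg b)]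
  · have key : D 1 - γ ^ 6 • ((-8 : ℝ) • a + (4 / 3 : ℝ) • b) = (alv γ 1 - ((-8)*γ^6)) • a + (bev γ 1 - (((4)/3)*γ^6)) • b := by
      rw [hDi 1]; module
    rw [key]
    refine le_trans (norm_add_le _ _) ?_
    rw [norm_smul, norm_smul, Real.norm_eq_abs, Real.norm_eq_abs]
    have b1 := diff1a γ hγ0 hγ5
    have b2 := diff1b γ hγ0 hγ5
    refine le_trans (add_le_add (mul_le_mul_of_nonneg_right b1 (norm_nonneg a))
      (mul_le_mul_of_nonneg_right b2 (norm_nonneg b))) ?_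
    nlinarith [pow_nonneg hγ0.le 8, norm_nonneg a, norm_nonneg b,
      mul_nonneg (pow_nonneg hγ0.le 8) (norm_nonneg a),
      mul_nonneg (pow_nonneg hγ0.le 8) (norm_nonneg b)]
  · have key : D 2 - ((6⁻¹ * (1 + 36 * γ ^ 4)) • a - γ ^ 4 • b) = (alv γ 2 - (((1)/6) + (6)*γ^4)) • a + (bev γ 2 - ((-1)*γ^4)) • b := by
      rw [hDi 2]; module
    rw [key]
    refine le_trans (norm_add_le _ _) ?_
    rw [norm_smul, norm_smul, Real.norm_eq_abs, Real.norm_eq_abs]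
    have b1 := diff2a γ hγ0 hγ5
    have b2 := diff2b γ hγ0 hγ5
    refine le_trans (add_le_add (mul_le_mul_of_nonneg_right b1 (norm_nonneg a))
      (mul_le_mul_of_nonneg_right b2 (norm_nonneg b))) ?_
    nlinarith [pow_nonneg hγ0.le 6, norm_nonneg a, norm_nonneg b,
      mul_nonneg (pow_nonneg hγ0.le 6) (norm_nonneg a),
      mul_nonneg (pow_nonneg hγ0.le 6) (norm_nonneg b)]
  · have key : D 3 - (1 + 36 * γ ^ 4) • ((-1 : ℝ) • a + (6 : ℝ)⁻¹ • b) = (alv γ 3 - ((-1) + (-36)*γ^4)) • a + (bev γ 3 - (((1)/6) + (6)*γ^4)) • b := by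
      rw [hDi 3]; module
    rw [key]
    refine le_trans (norm_add_le _ _) ?_
    rw [norm_smul, norm_smul, Real.norm_eq_abs, Real.norm_eq_abs]
    have b1 := diff3a γ hγ0 hγ5
    have b2 := diff3b γ hγ0 hγ5
    refine le_trans (add_le_add (mul_le_mul_of_nonneg_right b1 (norm_nonneg a))
      (mul_le_mul_of_nonneg_right b2 (norm_nonneg b))) ?_
    nlinarith [pow_nonneg hγ0.le 6, norm_nonneg a, norm_nonneg b,
      mul_nonneg (pow_nonneg hγ0.le 6) (norm_nonneg a),
      mul_nonneg (pow_nonneg hγ0.le 6) (norm_nonneg b)]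
  · have key : D 4 - ((4 / 3 * (1 + 36 * γ ^ 4)) • a - (8 * γ ^ 4) • b) = (alv γ 4 - (((4)/3) + (48)*γ^4)) • a + (bev γ 4 - ((-8)*γ^4)) • b := by
      rw [hDi 4]; module
    rw [key]
    refine le_trans (norm_add_le _ _) ?_
    rw [norm_smul, norm_smul, Real.norm_eq_abs, Real.norm_eq_abs]
    have b1 := diff4a γ hγ0 hγ5
    have b2 := diff4b γ hγ0 hγ5
    refine le_trans (add_le_add (mul_le_mul_of_nonneg_right b1 (norm_nonneg a))
      (mul_le_mul_of_nonneg_right b2 (norm_nonneg b))) ?_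
    nlinarith [pow_nonneg hγ0.le 6, norm_nonneg a, norm_nonneg b,
      mul_nonneg (pow_nonneg hγ0.le 6) (norm_nonneg a),
      mul_nonneg (pow_nonneg hγ0.le 6) (norm_nonneg b)]
  · have key : D 5 - (-(2⁻¹ * (1 + 36 * γ ^ 4)) • a + (3 * γ ^ 4) • b) = (alv γ 5 - (((-1)/2) + (-18)*γ^4)) • a + (bev γ 5 - ((3)*γ^4)) • b := by
      rw [hDi 5]; module
    rw [key]
    refine le_trans (norm_add_le _ _) ?_
    rw [norm_smul, norm_smul, Real.norm_eq_abs, Real.norm_eq_abs]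
    have b1 := diff5a γ hγ0 hγ5
    have b2 := diff5b γ hγ0 hγ5
    refine le_trans (add_le_add (mul_le_mul_of_nonneg_right b1 (norm_nonneg a))
      (mul_le_mul_of_nonneg_right b2 (norm_nonneg b))) ?_
    nlinarith [pow_nonneg hγ0.le 6, norm_nonneg a, norm_nonneg b,
      mul_nonneg (pow_nonneg hγ0.le 6) (norm_nonneg a),
      mul_nonneg (pow_nonneg hγ0.le 6) (norm_nonneg b)]
end
end

section
/- Let k ≥ 1 and let P̊ = (P̊₁,…,P̊ₖ) and R̊ = (R̊₁,…,R̊ₖ) be k-tuples of symmetric traceless real 4×4 matrices. Then there exist orthogonal matrices S ∈ O(4) and T ∈ O(k) such that Σ_{i,j=1}^{k} T_{ij} · Tr(S P̊ⱼ Sᵀ R̊ᵢ) ≥ 0. Furthermore, if P̊ ≠ 0 and R̊ ≠ 0 (i.e., some P̊ⱼ ≠ 0 and some R̊ᵢ ≠ 0), then S and T can be chosen so that Σ_{i,j=1}^{k} T_{ij} · Tr(S P̊ⱼ Sᵀ R̊ᵢ) > 0. -/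
open Matrix

noncomputable section

namespace Stmt13Aux

variable {n : Type*} [Fintype n] [DecidableEq n]

/-- The permutation matrix of `σ`. -/
def permMat (σ : Equiv.Perm n) : Matrix n n ℝ := Matrix.of fun i j => if i = σ j then 1 else 0

lemma permMat_mem (σ : Equiv.Perm n) : permMat σ ∈ Matrix.orthogonalGroup n ℝ := by
  rw [Matrix.mem_orthogonalGroup_iff]
  ext i i'
  simp only [Matrix.mul_apply, Matrix.star_eq_conjTranspose,
    Matrix.conjTranspose_apply, star_trivial, permMat, Matrix.of_apply, Matrix.one_apply]
  simp only [show ∀ j : n, (i = σ j) ↔ (σ.symm i = j) from fun j => (Equiv.symm_apply_eq σ).symm,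
    show ∀ j : n, (i' = σ j) ↔ (σ.symm i' = j) from fun j => (Equiv.symm_apply_eq σ).symm]
  by_cases h : i = i'
  · subst h
    simp [mul_ite, ite_mul, Finset.sum_ite_eq, ← Equiv.symm_apply_eq]
  · have hne : σ.symm i ≠ σ.symm i' := fun h' => h (σ.symm.injective h')
    simp [h, hne, mul_ite, ite_mul, Finset.sum_ite_eq, ← Equiv.symm_apply_eq]

lemma diag_sign_mem (ε : n → ℝ) (hε : ∀ j, ε j = 1 ∨ ε j = -1) :
    Matrix.diagonal ε ∈ Matrix.orthogonalGroup n ℝ := by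
  rw [Matrix.mem_orthogonalGroup_iff]
  have h1 : star (Matrix.diagonal ε) = Matrix.diagonal ε := by
    simp [Matrix.star_eq_conjTranspose, Matrix.diagonal_conjTranspose]
  rw [Matrix.diagonal_transpose, Matrix.diagonal_mul_diagonal]
  have : (fun i => ε i * ε i) = fun _ : n => (1 : ℝ) := by
    funext j
    rcases hε j with h | h <;> rw [h] <;> norm_num
  rw [this, Matrix.diagonal_one]

lemma permMat_conj (σ : Equiv.Perm n) (d : n → ℝ) :
    permMat σ * Matrix.diagonal d * (permMat σ)ᵀ = Matrix.diagonal (d ∘ σ.symm) := by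
  ext i i'
  simp only [Matrix.mul_apply, Matrix.transpose_apply, permMat, Matrix.of_apply,
    Matrix.diagonal_apply, Function.comp]
  simp only [show ∀ j : n, (i = σ j) ↔ (σ.symm i = j) from fun j => (Equiv.symm_apply_eq σ).symm,
    show ∀ j : n, (i' = σ j) ↔ (σ.symm i' = j) from fun j => (Equiv.symm_apply_eq σ).symm]
  by_cases h : i = i'
  · subst h
    simp [mul_ite, ite_mul, Finset.sum_ite_eq]
  · have hne : σ.symm i ≠ σ.symm i' := fun h' => h (σ.symm.injective h')
    simp [h, hne, mul_ite, ite_mul, Finset.sum_ite_eq]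

lemma exists_perm (d e : Fin 4 → ℝ) (hd : ∑ i, d i = 0) (he : ∑ i, e i = 0)
    (hd0 : d ≠ 0) (he0 : e ≠ 0) :
    ∃ σ : Equiv.Perm (Fin 4), ∑ i, d (σ i) * e i ≠ 0 := by
  have hnc : ∀ (f : Fin 4 → ℝ), (∑ i, f i = 0) → f ≠ 0 → ∃ p q, f p ≠ f q := by
    intro f hf hf0
    by_contra h
    push_neg at h
    apply hf0
    funext x
    have h4 : ∑ i, f i = (4 : ℝ) * f x :=
      calc ∑ i, f i = ∑ _i : Fin 4, f x := Finset.sum_congr rfl fun i _ => h i x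
        _ = (4 : ℝ) * f x := by rw [Finset.sum_const, Finset.card_fin]; ring
    have h0 : (4 : ℝ) * f x = 0 := by rw [← h4]; exact hf
    show f x = (0 : Fin 4 → ℝ) x
    rw [Pi.zero_apply]
    linarith
  obtain ⟨p, q, hpq⟩ := hnc d hd hd0
  obtain ⟨a, b, hab⟩ := hnc e he he0
  have hab' : a ≠ b := fun h => hab (by rw [h])
  have hpq' : p ≠ q := fun h => hpq (by rw [h])
  set τ : Equiv.Perm (Fin 4) := Equiv.swap a p with hτ
  set υ : Equiv.Perm (Fin 4) := Equiv.swap (τ b) q with hυ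
  set σ₀ : Equiv.Perm (Fin 4) := υ * τ with hσ₀
  have hτa : τ a = p := Equiv.swap_apply_left a p
  have hτbp : τ b ≠ p := by
    rw [← hτa]; exact fun h => hab' (τ.injective h).symm
  have hσa : σ₀ a = p := by
    rw [hσ₀, Equiv.Perm.mul_apply, hτa, hυ]
    exact Equiv.swap_apply_of_ne_of_ne (Ne.symm hτbp) hpq'
  have hσb : σ₀ b = q := by
    rw [hσ₀, Equiv.Perm.mul_apply, hυ]
    exact Equiv.swap_apply_left _ _
  by_contra h
  push_neg at h
  have h1 := h σ₀
  have h2 := h (σ₀ * Equiv.swap a b)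
  have hzero : ∑ i, (d (σ₀ i) * e i - d (σ₀ (Equiv.swap a b i)) * e i) = 0 := by
    rw [Finset.sum_sub_distrib, h1]
    have heq : ∑ i, d ((σ₀ * Equiv.swap a b) i) * e i
        = ∑ i, d (σ₀ (Equiv.swap a b i)) * e i := by
      simp [Equiv.Perm.mul_apply]
    rw [← heq, h2, sub_zero]
  have hpair : ∑ i, (d (σ₀ i) * e i - d (σ₀ (Equiv.swap a b i)) * e i)
      = (d p - d q) * (e a - e b) := by
    rw [← Finset.sum_subset (Finset.subset_univ ({a, b} : Finset (Fin 4)))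
      (fun i _ hi => ?_)]
    · rw [Finset.sum_pair hab']
      rw [Equiv.swap_apply_left, Equiv.swap_apply_right, hσa, hσb]
      ring
    · simp only [Finset.mem_insert, Finset.mem_singleton, not_or] at hi
      rw [Equiv.swap_apply_of_ne_of_ne hi.1 hi.2, sub_self]
  rw [hpair] at hzero
  rcases mul_eq_zero.mp hzero with h' | h'
  · exact hpq (by linarith [sub_eq_zero.mp h'])
  · exact hab (by linarith [sub_eq_zero.mp h'])

lemma key (P R : Matrix (Fin 4) (Fin 4) ℝ)
    (hPsymm : P.IsSymm) (hPtr : P.trace = 0)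
    (hRsymm : R.IsSymm) (hRtr : R.trace = 0)
    (hP0 : P ≠ 0) (hR0 : R ≠ 0) :
    ∃ S ∈ Matrix.orthogonalGroup (Fin 4) ℝ, (S * P * Sᵀ * R).trace ≠ 0 := by
  have hPh : P.IsHermitian := by
    rw [Matrix.IsHermitian, Matrix.conjTranspose_eq_transpose_of_trivial]; exact hPsymm
  have hRh : R.IsHermitian := by
    rw [Matrix.IsHermitian, Matrix.conjTranspose_eq_transpose_of_trivial]; exact hRsymm
  set d : Fin 4 → ℝ := hPh.eigenvalues with hd
  set e : Fin 4 → ℝ := hRh.eigenvalues with he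
  set U : Matrix (Fin 4) (Fin 4) ℝ :=
    (Matrix.IsHermitian.eigenvectorUnitary hPh : Matrix (Fin 4) (Fin 4) ℝ) with hU
  set V : Matrix (Fin 4) (Fin 4) ℝ :=
    (Matrix.IsHermitian.eigenvectorUnitary hRh : Matrix (Fin 4) (Fin 4) ℝ) with hV
  have hUmem : U ∈ Matrix.orthogonalGroup (Fin 4) ℝ :=
    (Matrix.IsHermitian.eigenvectorUnitary hPh).2
  have hVmem : V ∈ Matrix.orthogonalGroup (Fin 4) ℝ :=
    (Matrix.IsHermitian.eigenvectorUnitary hRh).2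
  have hPspec : P = U * Matrix.diagonal d * Uᵀ := by
    have := hPh.spectral_theorem
    simpa [← Matrix.conjTranspose_eq_transpose_of_trivial, Matrix.star_eq_conjTranspose] using this
  have hRspec : R = V * Matrix.diagonal e * Vᵀ := by
    have := hRh.spectral_theorem
    simpa [← Matrix.conjTranspose_eq_transpose_of_trivial, Matrix.star_eq_conjTranspose] using this
  have hUtU : Uᵀ * U = 1 := by
    have := (Matrix.mem_orthogonalGroup_iff' (Fin 4) ℝ).mp hUmem
    exact this
  have hVtV : Vᵀ * V = 1 := by
    have := (Matrix.mem_orthogonalGroup_iff' (Fin 4) ℝ).mp hVmem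
    exact this
  have hsumd : ∑ i, d i = 0 := by
    have htr : P.trace = ∑ i, d i := by
      rw [hPspec, Matrix.trace_mul_cycle, hUtU, Matrix.one_mul, Matrix.trace_diagonal]
    rw [← htr, hPtr]
  have hsume : ∑ i, e i = 0 := by
    have htr : R.trace = ∑ i, e i := by
      rw [hRspec, Matrix.trace_mul_cycle, hVtV, Matrix.one_mul, Matrix.trace_diagonal]
    rw [← htr, hRtr]
  have hd0 : d ≠ 0 := by
    intro h
    apply hP0
    rw [hPspec, h, show Matrix.diagonal (0 : Fin 4 → ℝ) = 0 from Matrix.diagonal_zero,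
      Matrix.mul_zero, Matrix.zero_mul]
  have he0 : e ≠ 0 := by
    intro h
    apply hR0
    rw [hRspec, h, show Matrix.diagonal (0 : Fin 4 → ℝ) = 0 from Matrix.diagonal_zero,
      Matrix.mul_zero, Matrix.zero_mul]
  obtain ⟨σ, hσ⟩ := exists_perm d e hsumd hsume hd0 he0
  set M : Matrix (Fin 4) (Fin 4) ℝ := permMat σ.symm with hM
  have hMmem : M ∈ Matrix.orthogonalGroup (Fin 4) ℝ := permMat_mem σ.symm
  refine ⟨V * M * Uᵀ, ?_, ?_⟩
  · refine mul_mem (mul_mem hVmem hMmem) ?_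
    have := Unitary.star_mem hUmem
    simpa [Matrix.star_eq_conjTranspose, Matrix.conjTranspose_eq_transpose_of_trivial] using this
  · have cancelU : ∀ X : Matrix (Fin 4) (Fin 4) ℝ, Uᵀ * (U * X) = X := fun X => by
      rw [← Matrix.mul_assoc, hUtU, Matrix.one_mul]
    have cancelV : ∀ X : Matrix (Fin 4) (Fin 4) ℝ, Vᵀ * (V * X) = X := fun X => by
      rw [← Matrix.mul_assoc, hVtV, Matrix.one_mul]
    have hexpr : V * M * Uᵀ * P * (V * M * Uᵀ)ᵀ * R
        = V * (M * (Matrix.diagonal d * (Mᵀ * (Matrix.diagonal e * Vᵀ)))) := by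
      rw [hPspec, hRspec]
      simp only [Matrix.transpose_mul, Matrix.transpose_transpose, Matrix.mul_assoc]
      rw [cancelU, cancelU, cancelV]
    rw [hexpr, Matrix.trace_mul_comm]
    simp only [Matrix.mul_assoc]
    rw [hVtV, Matrix.mul_one]
    simp only [← Matrix.mul_assoc]
    rw [hM, permMat_conj, Matrix.diagonal_mul_diagonal, Matrix.trace_diagonal]
    simpa [Function.comp] using hσ

end Stmt13Aux

open Stmt13Aux

/-- given `k`-tuples `P̊, R̊` of symmetric traceless real 4×4 matrices, there are
orthogonal transformations `S ∈ O(4)`, `T ∈ O(k)` making the pairing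
`Σ_{i,j} T_{ij} Tr(S P̊ⱼ Sᵀ R̊ᵢ)` nonnegative, and positive when `P̊ ≠ 0` and `R̊ ≠ 0`. -/
theorem stmt13 (k : ℕ) (hk : 1 ≤ k) (P R : Fin k → Matrix (Fin 4) (Fin 4) ℝ)
    (hPsymm : ∀ j, (P j).IsSymm) (hPtr : ∀ j, (P j).trace = 0)
    (hRsymm : ∀ i, (R i).IsSymm) (hRtr : ∀ i, (R i).trace = 0) :
    (∃ S ∈ Matrix.orthogonalGroup (Fin 4) ℝ, ∃ T ∈ Matrix.orthogonalGroup (Fin k) ℝ,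
      0 ≤ ∑ i : Fin k, ∑ j : Fin k, T i j * (S * P j * Sᵀ * R i).trace) ∧
    (P ≠ 0 → R ≠ 0 →
      ∃ S ∈ Matrix.orthogonalGroup (Fin 4) ℝ, ∃ T ∈ Matrix.orthogonalGroup (Fin k) ℝ,
        0 < ∑ i : Fin k, ∑ j : Fin k, T i j * (S * P j * Sᵀ * R i).trace) := by
  constructor
  · -- nonnegative part: S = 1, T = ±1
    have hone : (1 : Matrix (Fin 4) (Fin 4) ℝ) ∈ Matrix.orthogonalGroup (Fin 4) ℝ := one_mem _
    have honek : (1 : Matrix (Fin k) (Fin k) ℝ) ∈ Matrix.orthogonalGroup (Fin k) ℝ := one_mem _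
    have hnegk : (-1 : Matrix (Fin k) (Fin k) ℝ) ∈ Matrix.orthogonalGroup (Fin k) ℝ := by
      rw [Matrix.mem_orthogonalGroup_iff]
      simp
    have hcalc : ∑ i : Fin k, ∑ j : Fin k, (1 : Matrix (Fin k) (Fin k) ℝ) i j
          * ((1 : Matrix (Fin 4) (Fin 4) ℝ) * P j * (1 : Matrix (Fin 4) (Fin 4) ℝ)ᵀ * R i).trace
        = ∑ i : Fin k, (P i * R i).trace := by
      simp [Matrix.one_apply, ite_mul]
    have hcalcneg : ∑ i : Fin k, ∑ j : Fin k, (-1 : Matrix (Fin k) (Fin k) ℝ) i j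
          * ((1 : Matrix (Fin 4) (Fin 4) ℝ) * P j * (1 : Matrix (Fin 4) (Fin 4) ℝ)ᵀ * R i).trace
        = -∑ i : Fin k, (P i * R i).trace := by
      simp [Matrix.neg_apply, Matrix.one_apply, ite_mul]
    rcases le_or_gt 0 (∑ i : Fin k, (P i * R i).trace) with h | h
    · exact ⟨1, hone, 1, honek, by rw [hcalc]; exact h⟩
    · exact ⟨1, hone, -1, hnegk, by rw [hcalcneg]; linarith⟩
  · intro hP0 hR0
    obtain ⟨j₀, hj₀⟩ := Function.ne_iff.mp hP0
    obtain ⟨i₀, hi₀⟩ := Function.ne_iff.mp hR0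
    simp only [Pi.zero_apply] at hj₀ hi₀
    obtain ⟨S, hSmem, hS⟩ := key (P j₀) (R i₀) (hPsymm j₀) (hPtr j₀) (hRsymm i₀) (hRtr i₀) hj₀ hi₀
    set σ : Equiv.Perm (Fin k) := Equiv.swap j₀ i₀ with hσdef
    have hσj₀ : σ j₀ = i₀ := Equiv.swap_apply_left _ _
    set c : Fin k → ℝ := fun j => (S * P j * Sᵀ * R (σ j)).trace with hc
    set ε : Fin k → ℝ := fun j => if 0 ≤ c j then 1 else -1 with hε
    have hεpm : ∀ j, ε j = 1 ∨ ε j = -1 := fun j => by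
      rw [hε]; dsimp only
      by_cases h : 0 ≤ c j
      · left; rw [if_pos h]
      · right; rw [if_neg h]
    have habs : ∀ j, ε j * c j = |c j| := by
      intro j
      rw [hε]; dsimp only
      by_cases h : 0 ≤ c j
      · rw [if_pos h, one_mul, abs_of_nonneg h]
      · rw [if_neg h, abs_of_neg (not_le.mp h)]; ring
    set T : Matrix (Fin k) (Fin k) ℝ := permMat σ * Matrix.diagonal ε with hT
    have hTmem : T ∈ Matrix.orthogonalGroup (Fin k) ℝ :=
      mul_mem (permMat_mem σ) (diag_sign_mem ε hεpm)
    refine ⟨S, hSmem, T, hTmem, ?_⟩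
    have hsum : ∑ i : Fin k, ∑ j : Fin k, T i j * (S * P j * Sᵀ * R i).trace
        = ∑ j : Fin k, ε j * c j := by
      rw [Finset.sum_comm]
      refine Finset.sum_congr rfl fun j _ => ?_
      have hTij : ∀ i, T i j = (if i = σ j then (1 : ℝ) else 0) * ε j := fun i => by
        rw [hT, Matrix.mul_diagonal]
        rfl
      simp only [hTij, ite_mul, one_mul, zero_mul]
      rw [Finset.sum_ite_eq' Finset.univ (σ j) (fun i => ε j * (S * P j * Sᵀ * R i).trace)]
      simp [hc]
    rw [hsum]
    have hcj₀ : c j₀ ≠ 0 := by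
      rw [hc]; dsimp only; rw [hσj₀]; exact hS
    refine Finset.sum_pos' (fun j _ => by rw [habs j]; exact abs_nonneg _)
      ⟨j₀, Finset.mem_univ j₀, by rw [habs j₀]; exact abs_pos.mpr hcj₀⟩
end
end
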